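/- arXiv:2001.01878 — 8 statements merged into one kernel-verified Lean document; each statement's English description precedes it below -/
import Mathlib

section
/- (Equality condition for B = C in Eq. (9).) For a function r : X × Z → ℝ, equality B(r) = C(r) holds if and only if for every z the value r̄(y,z) = (∑_x p(x,y) q(x,z) r(x,z)) / p(y,z) is independent of y, i.e. r̄(y,z) = r̄(z) for all y, z. -/
open Finset Filter Matrix

variable {X Y Z : Type*} [Fintype X] [Fintype Y] [Fintype Z]

/-- marginal p(x) = ∑_y p(x,y) -/
noncomputable def pX (p : X → Y → ℝ) (x : X) : ℝ := ∑ y, p x y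

/-- marginal p(y) = ∑_x p(x,y) -/
noncomputable def pY (p : X → Y → ℝ) (y : Y) : ℝ := ∑ x, p x y

/-- marginal p(z) = ∑_x p(x) q(x,z) -/
noncomputable def pZ (p : X → Y → ℝ) (q : X → Z → ℝ) (z : Z) : ℝ := ∑ x, pX p x * q x z

/-- joint p(y,z) = ∑_x p(x,y) q(x,z) -/
noncomputable def pYZ (p : X → Y → ℝ) (q : X → Z → ℝ) (y : Y) (z : Z) : ℝ := ∑ x, p x y * q x z

/-- A(r) = ∑_{x,z} p(x) q(x,z) r(x,z)² -/
noncomputable def termA (p : X → Y → ℝ) (q : X → Z → ℝ) (r : X → Z → ℝ) : ℝ :=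
  ∑ x, ∑ z, pX p x * q x z * r x z ^ 2

/-- C(r) = ∑_z (∑_x p(x) q(x,z) r(x,z))² / p(z) -/
noncomputable def termC (p : X → Y → ℝ) (q : X → Z → ℝ) (r : X → Z → ℝ) : ℝ :=
  ∑ z, (∑ x, pX p x * q x z * r x z) ^ 2 / pZ p q z

/-- B(r) = ∑_{y,z} (∑_x p(x,y) q(x,z) r(x,z))² / p(y,z) -/
noncomputable def termB (p : X → Y → ℝ) (q : X → Z → ℝ) (r : X → Z → ℝ) : ℝ :=
  ∑ y, ∑ z, (∑ x, p x y * q x z * r x z) ^ 2 / pYZ p q y z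

/-- r̄(z) = (∑_x p(x) q(x,z) r(x,z)) / p(z) -/
noncomputable def rbarZ (p : X → Y → ℝ) (q : X → Z → ℝ) (r : X → Z → ℝ) (z : Z) : ℝ :=
  (∑ x, pX p x * q x z * r x z) / pZ p q z

/-- r̄(y,z) = (∑_x p(x,y) q(x,z) r(x,z)) / p(y,z) -/
noncomputable def rbarYZ (p : X → Y → ℝ) (q : X → Z → ℝ) (r : X → Z → ℝ) (y : Y) (z : Z) : ℝ :=
  (∑ x, p x y * q x z * r x z) / pYZ p q y z

/-- Key algebraic identity: Cauchy–Schwarz style difference as a sum of squares. -/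
lemma key_identity {Y : Type*} [Fintype Y] [Nonempty Y] (a s : Y → ℝ) (ha : ∀ y, 0 < a y) :
    ∑ y, (s y) ^ 2 / a y - (∑ y, s y) ^ 2 / (∑ y, a y)
      = ∑ y, a y * (s y / a y - (∑ y, s y) / (∑ y, a y)) ^ 2 := by
  set P := ∑ y, a y with hP
  have hPpos : 0 < P := Finset.sum_pos (fun y _ => ha y) Finset.univ_nonempty
  set t := ∑ y, s y with ht
  have hterm : ∀ y, a y * (s y / a y - t / P) ^ 2
      = (s y) ^ 2 / a y - 2 * s y * t / P + a y * t ^ 2 / P ^ 2 := by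
    intro y
    have h1 : (a y : ℝ) ≠ 0 := (ha y).ne'
    have h2 : (P : ℝ) ≠ 0 := hPpos.ne'
    field_simp
    ring
  rw [Finset.sum_congr rfl (fun y _ => hterm y), Finset.sum_add_distrib,
    Finset.sum_sub_distrib]
  have h2 : (P : ℝ) ≠ 0 := hPpos.ne'
  have hA : ∑ y, 2 * s y * t / P = 2 * t ^ 2 / P := by
    rw [← Finset.sum_div]
    congr 1
    rw [ht]
    rw [← Finset.sum_mul, ← Finset.mul_sum]
    ring
  have hB : ∑ y, a y * t ^ 2 / P ^ 2 = t ^ 2 / P := by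
    rw [← Finset.sum_div, ← Finset.sum_mul, ← hP]
    field_simp
  rw [hA, hB]
  ring

/-- Equality condition for B = C in Eq. (9): B(r) = C(r) iff r̄(y,z) is independent of y. -/
theorem eq_B_C_iff [Nonempty X] [Nonempty Y] [Nonempty Z]
    (p : X → Y → ℝ) (q : X → Z → ℝ)
    (hp : ∀ x y, 0 < p x y) (hpsum : ∑ x, ∑ y, p x y = 1)
    (hq : ∀ x z, 0 < q x z) (hqsum : ∀ x, ∑ z, q x z = 1)
    (r : X → Z → ℝ) :
    termB p q r = termC p q r ↔ ∀ y z, rbarYZ p q r y z = rbarZ p q r z := by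
  -- abbreviations
  have huX : (Finset.univ : Finset X).Nonempty := Finset.univ_nonempty
  have hpYZ : ∀ y z, 0 < pYZ p q y z := fun y z =>
    Finset.sum_pos (fun x _ => mul_pos (hp x y) (hq x z)) huX
  have hpXx : ∀ x, 0 < pX p x := fun x =>
    Finset.sum_pos (fun y _ => hp x y) Finset.univ_nonempty
  have hpZ : ∀ z, 0 < pZ p q z := fun z =>
    Finset.sum_pos (fun x _ => mul_pos (hpXx x) (hq x z)) huX
  have hsum_a : ∀ z, ∑ y, pYZ p q y z = pZ p q z := by
    intro z
    unfold pYZ pZ pX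
    rw [Finset.sum_comm]
    exact Finset.sum_congr rfl fun x _ => by rw [← Finset.sum_mul]
  have hsum_s : ∀ z, (∑ y, ∑ x, p x y * q x z * r x z) = ∑ x, pX p x * q x z * r x z := by
    intro z
    rw [Finset.sum_comm]
    refine Finset.sum_congr rfl fun x _ => ?_
    unfold pX
    rw [← Finset.sum_mul, ← Finset.sum_mul]
  have hdiff : termB p q r - termC p q r
      = ∑ z, ∑ y, pYZ p q y z * (rbarYZ p q r y z - rbarZ p q r z) ^ 2 := by
    unfold termB termC
    rw [Finset.sum_comm, ← Finset.sum_sub_distrib]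
    refine Finset.sum_congr rfl fun z _ => ?_
    have := key_identity (fun y => pYZ p q y z) (fun y => ∑ x, p x y * q x z * r x z)
      (fun y => hpYZ y z)
    simp only [hsum_a z, hsum_s z] at this
    rw [this]
    exact Finset.sum_congr rfl fun y _ => by unfold rbarYZ rbarZ; rfl
  constructor
  · intro hBC y z
    have h0 : ∑ z, ∑ y, pYZ p q y z * (rbarYZ p q r y z - rbarZ p q r z) ^ 2 = 0 := by
      rw [← hdiff, hBC, sub_self]
    have hnn : ∀ z ∈ Finset.univ, (0:ℝ) ≤ ∑ y, pYZ p q y z * (rbarYZ p q r y z - rbarZ p q r z) ^ 2 :=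
      fun z _ => Finset.sum_nonneg fun y _ => mul_nonneg (hpYZ y z).le (sq_nonneg _)
    have hz := (Finset.sum_eq_zero_iff_of_nonneg hnn).mp h0 z (Finset.mem_univ z)
    have hnn2 : ∀ y ∈ Finset.univ, (0:ℝ) ≤ pYZ p q y z * (rbarYZ p q r y z - rbarZ p q r z) ^ 2 :=
      fun y _ => mul_nonneg (hpYZ y z).le (sq_nonneg _)
    have hy := (Finset.sum_eq_zero_iff_of_nonneg hnn2).mp hz y (Finset.mem_univ y)
    have := (mul_eq_zero.mp hy).resolve_left (hpYZ y z).ne'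
    have := sub_eq_zero.mp (pow_eq_zero_iff (n := 2) (by norm_num) |>.mp this)
    exact this
  · intro h
    have : termB p q r - termC p q r = 0 := by
      rw [hdiff]
      refine Finset.sum_eq_zero fun z _ => Finset.sum_eq_zero fun y _ => ?_
      rw [h y z, sub_self]
      ring
    linarith
end

section
/- (Equality condition for A = B in Eq. (9).) For a function r : X × Z → ℝ, equality A(r) = B(r) holds if and only if for every z the function x ↦ r(x,z) is constant, i.e. there exists c : Z → ℝ with r(x,z) = c(z) for all x, z. -/
open Finset Filter Matrix

variable {X Y Z : Type*} [Fintype X] [Fintype Y] [Fintype Z]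

/-- Equality condition for A = B in Eq. (9): A(r) = B(r) iff r(x,z) is constant in x. -/
theorem eq_A_B_iff [Nonempty X] [Nonempty Y] [Nonempty Z]
    (p : X → Y → ℝ) (q : X → Z → ℝ)
    (hp : ∀ x y, 0 < p x y) (hpsum : ∑ x, ∑ y, p x y = 1)
    (hq : ∀ x z, 0 < q x z) (hqsum : ∀ x, ∑ z, q x z = 1)
    (r : X → Z → ℝ) :
    termA p q r = termB p q r ↔ ∃ c : Z → ℝ, ∀ x z, r x z = c z := by
  have hW : ∀ y z, 0 < pYZ p q y z := fun y z =>
    Finset.sum_pos (fun x _ => mul_pos (hp x y) (hq x z)) (Finset.univ_nonempty : (Finset.univ : Finset X).Nonempty)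
  -- per (y,z) identity
  have per : ∀ y z, ∑ x, p x y * q x z * (r x z - rbarYZ p q r y z) ^ 2
      = (∑ x, p x y * q x z * r x z ^ 2)
        - (∑ x, p x y * q x z * r x z) ^ 2 / pYZ p q y z := by
    intro y z
    have hW0 : pYZ p q y z ≠ 0 := (hW y z).ne'
    have hr : rbarYZ p q r y z
        = (∑ x, p x y * q x z * r x z) / pYZ p q y z := rfl
    set S := ∑ x, p x y * q x z * r x z with hS
    set W := pYZ p q y z with hWdef
    have expand : ∀ x, p x y * q x z * (r x z - S / W) ^ 2
        = p x y * q x z * r x z ^ 2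
          - 2 * (S / W) * (p x y * q x z * r x z)
          + (S / W) ^ 2 * (p x y * q x z) := by
      intro x; ring
    rw [hr]
    simp_rw [expand]
    rw [Finset.sum_add_distrib, Finset.sum_sub_distrib, ← Finset.mul_sum,
      ← Finset.mul_sum, ← hS]
    have hWsum : ∑ x, p x y * q x z = W := rfl
    rw [hWsum]
    field_simp
    ring
  have hA : termA p q r = ∑ y, ∑ z, ∑ x, p x y * q x z * r x z ^ 2 := by
    have step : ∀ (f : X → Z → Y → ℝ),
        ∑ x, ∑ z, ∑ y, f x z y = ∑ y, ∑ z, ∑ x, f x z y := by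
      intro f
      calc ∑ x, ∑ z, ∑ y, f x z y
          = ∑ x, ∑ y, ∑ z, f x z y := Finset.sum_congr rfl fun x _ => Finset.sum_comm
        _ = ∑ y, ∑ x, ∑ z, f x z y := Finset.sum_comm
        _ = ∑ y, ∑ z, ∑ x, f x z y := Finset.sum_congr rfl fun y _ => Finset.sum_comm
    unfold termA pX
    simp_rw [Finset.sum_mul]
    exact step _
  have key : termA p q r - termB p q r
      = ∑ y, ∑ z, ∑ x, p x y * q x z * (r x z - rbarYZ p q r y z) ^ 2 := by
    rw [hA]
    unfold termB
    rw [← Finset.sum_sub_distrib]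
    refine Finset.sum_congr rfl fun y _ => ?_
    rw [← Finset.sum_sub_distrib]
    refine Finset.sum_congr rfl fun z _ => ?_
    exact (per y z).symm
  have hterm_nonneg : ∀ y z x, (0:ℝ) ≤ p x y * q x z * (r x z - rbarYZ p q r y z) ^ 2 :=
    fun y z x => mul_nonneg (mul_pos (hp x y) (hq x z)).le (sq_nonneg _)
  constructor
  · intro hAB
    have hzero : ∑ y, ∑ z, ∑ x, p x y * q x z * (r x z - rbarYZ p q r y z) ^ 2 = 0 := by
      rw [← key, hAB, sub_self]
    have hall : ∀ y ∈ Finset.univ, ∀ z ∈ Finset.univ, ∀ x ∈ Finset.univ,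
        p x y * q x z * (r x z - rbarYZ p q r y z) ^ 2 = 0 := by
      have h1 := (Finset.sum_eq_zero_iff_of_nonneg (fun y _ =>
        Finset.sum_nonneg fun z _ => Finset.sum_nonneg fun x _ =>
          hterm_nonneg y z x)).mp hzero
      intro y hy
      have h2 := (Finset.sum_eq_zero_iff_of_nonneg (fun z _ =>
        Finset.sum_nonneg fun x _ => hterm_nonneg y z x)).mp (h1 y hy)
      intro z hz
      exact (Finset.sum_eq_zero_iff_of_nonneg (fun x _ => hterm_nonneg y z x)).mp (h2 z hz)
    obtain ⟨y₀⟩ := ‹Nonempty Y›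
    refine ⟨fun z => rbarYZ p q r y₀ z, fun x z => ?_⟩
    have h := hall y₀ (Finset.mem_univ _) z (Finset.mem_univ _) x (Finset.mem_univ _)
    have hpq : p x y₀ * q x z ≠ 0 := (mul_pos (hp x y₀) (hq x z)).ne'
    have : (r x z - rbarYZ p q r y₀ z) ^ 2 = 0 := by
      rcases mul_eq_zero.mp h with h' | h'
      · exact absurd h' hpq
      · exact h'
    have := pow_eq_zero_iff (n := 2) (by norm_num) |>.mp this
    linarith [sub_eq_zero.mp this]
  · rintro ⟨c, hc⟩
    have hrbar : ∀ y z, rbarYZ p q r y z = c z := by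
      intro y z
      unfold rbarYZ
      simp_rw [hc, mul_comm _ (c z)]
      rw [← Finset.mul_sum]
      have : (∑ x, p x y * q x z) = pYZ p q y z := rfl
      rw [this, mul_div_assoc, div_self (hW y z).ne', mul_one]
    have : termA p q r - termB p q r = 0 := by
      rw [key]
      apply Finset.sum_eq_zero; intro y _
      apply Finset.sum_eq_zero; intro z _
      apply Finset.sum_eq_zero; intro x _
      rw [hrbar, hc, sub_self]
      ring
    linarith
end

section
/- (First variation of the IB objective, first-order term of Lemma A.1.) Let r : X × Z → ℝ satisfy ∑_z q(x,z) r(x,z) = 0 for every x. Then the function F is differentiable at ε = 0 and F′(0) = ∑_{x,z} p(x) q(x,z) r(x,z) · log(q(x,z)/p(z)) − β · ∑_{y,z} p(y,z) r̄(y,z) · log(p(y,z)/(p(y) p(z))). -/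
open Finset Filter Matrix

variable {X Y Z : Type*} [Fintype X] [Fintype Y] [Fintype Z]

/-- perturbed marginal p_ε(z) -/
noncomputable def pZe (p : X → Y → ℝ) (q : X → Z → ℝ) (r : X → Z → ℝ) (ε : ℝ) (z : Z) : ℝ :=
  ∑ x, pX p x * (q x z * (1 + ε * r x z))

/-- perturbed joint p_ε(y,z) -/
noncomputable def pYZe (p : X → Y → ℝ) (q : X → Z → ℝ) (r : X → Z → ℝ) (ε : ℝ) (y : Y) (z : Z) : ℝ :=
  ∑ x, p x y * (q x z * (1 + ε * r x z))

/-- perturbed IB objective F(ε) = I_ε(X;Z) - β I_ε(Y;Z) -/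
noncomputable def IBfun (p : X → Y → ℝ) (q : X → Z → ℝ) (r : X → Z → ℝ) (β : ℝ) (ε : ℝ) : ℝ :=
  (∑ x, ∑ z, pX p x * (q x z * (1 + ε * r x z)) *
      Real.log (q x z * (1 + ε * r x z) / pZe p q r ε z))
    - β * ∑ y, ∑ z, pYZe p q r ε y z * Real.log (pYZe p q r ε y z / (pY p y * pZe p q r ε z))

/-- First variation of the IB objective (first-order term of Lemma A.1). -/
theorem first_variation_IB [Nonempty X] [Nonempty Y] [Nonempty Z]
    (p : X → Y → ℝ) (q : X → Z → ℝ)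
    (hp : ∀ x y, 0 < p x y) (hpsum : ∑ x, ∑ y, p x y = 1)
    (hq : ∀ x z, 0 < q x z) (hqsum : ∀ x, ∑ z, q x z = 1)
    (β : ℝ) (r : X → Z → ℝ) (hr : ∀ x, ∑ z, q x z * r x z = 0) :
    HasDerivAt (IBfun p q r β)
      ((∑ x, ∑ z, pX p x * q x z * r x z * Real.log (q x z / pZ p q z))
        - β * ∑ y, ∑ z, pYZ p q y z * rbarYZ p q r y z *
            Real.log (pYZ p q y z / (pY p y * pZ p q z))) 0 := by
  classical
  have hpX : ∀ x, 0 < pX p x := fun x =>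
    Finset.sum_pos (fun y _ => hp x y) Finset.univ_nonempty
  have hpY : ∀ y, 0 < pY p y := fun y =>
    Finset.sum_pos (fun x _ => hp x y) Finset.univ_nonempty
  have hpZ : ∀ z, 0 < pZ p q z := fun z =>
    Finset.sum_pos (fun x _ => mul_pos (hpX x) (hq x z)) Finset.univ_nonempty
  have hpYZ : ∀ y z, 0 < pYZ p q y z := fun y z =>
    Finset.sum_pos (fun x _ => mul_pos (hp x y) (hq x z)) Finset.univ_nonempty
  set S : Z → ℝ := fun z => ∑ x, pX p x * q x z * r x z with hS
  set T : Y → Z → ℝ := fun y z => ∑ x, p x y * q x z * r x z with hT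
  have hpZe0 : ∀ z, pZe p q r 0 z = pZ p q z := by
    intro z; simp [pZe, pZ]
  have hpYZe0 : ∀ y z, pYZe p q r 0 y z = pYZ p q y z := by
    intro y z; simp [pYZe, pYZ]
  have haux : ∀ x z, HasDerivAt (fun ε : ℝ => 1 + ε * r x z) (r x z) 0 := by
    intro x z
    simpa using ((hasDerivAt_id (0:ℝ)).mul_const (r x z)).const_add 1
  have hg : ∀ x z, HasDerivAt (fun ε : ℝ => q x z * (1 + ε * r x z)) (q x z * r x z) 0 :=
    fun x z => (haux x z).const_mul (q x z)
  have hh : ∀ z, HasDerivAt (fun ε => pZe p q r ε z) (S z) 0 := by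
    intro z
    have h1 : ∀ x : X, HasDerivAt (fun ε : ℝ => pX p x * (q x z * (1 + ε * r x z)))
        (pX p x * q x z * r x z) 0 := by
      intro x
      have := ((haux x z).const_mul (q x z)).const_mul (pX p x)
      rw [show pX p x * q x z * r x z = pX p x * (q x z * r x z) by ring]; exact this
    exact HasDerivAt.fun_sum (fun x _ => h1 x)
  have hP : ∀ y z, HasDerivAt (fun ε => pYZe p q r ε y z) (T y z) 0 := by
    intro y z
    have h1 : ∀ x : X, HasDerivAt (fun ε : ℝ => p x y * (q x z * (1 + ε * r x z)))
        (p x y * q x z * r x z) 0 := by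
      intro x
      have := ((haux x z).const_mul (q x z)).const_mul (p x y)
      rw [show p x y * q x z * r x z = p x y * (q x z * r x z) by ring]; exact this
    exact HasDerivAt.fun_sum (fun x _ => h1 x)
  have key1 : ∀ x z, HasDerivAt
      (fun ε => pX p x * (q x z * (1 + ε * r x z)) *
        Real.log (q x z * (1 + ε * r x z) / pZe p q r ε z))
      (pX p x * (q x z * r x z) * Real.log (q x z / pZ p q z)
        + pX p x * (q x z * r x z) - pX p x * q x z * S z / pZ p q z) 0 := by
    intro x z
    have hZne : pZe p q r 0 z ≠ 0 := by rw [hpZe0]; exact (hpZ z).ne'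
    have hu := (hg x z).fun_div (hh z) hZne
    have hune : (q x z * (1 + (0:ℝ) * r x z)) / pZe p q r 0 z ≠ 0 := by
      rw [hpZe0]
      simp only [zero_mul, add_zero, mul_one]
      exact div_ne_zero (hq x z).ne' (hpZ z).ne'
    have hlog := hu.log hune
    have hfull := ((hg x z).const_mul (pX p x)).fun_mul hlog
    convert hfull using 1
    rfl
    rfl
    simp only [zero_mul, add_zero, mul_one, hpZe0]
    field_simp [(hq x z).ne', (hpZ z).ne']
    ring
  have key2 : ∀ y z, HasDerivAt
      (fun ε => pYZe p q r ε y z * Real.log (pYZe p q r ε y z / (pY p y * pZe p q r ε z)))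
      (T y z * Real.log (pYZ p q y z / (pY p y * pZ p q z))
        + T y z - pYZ p q y z * S z / pZ p q z) 0 := by
    intro y z
    have hden : HasDerivAt (fun ε => pY p y * pZe p q r ε z) (pY p y * S z) 0 :=
      (hh z).const_mul (pY p y)
    have hdne : pY p y * pZe p q r 0 z ≠ 0 := by
      rw [hpZe0]; exact (mul_pos (hpY y) (hpZ z)).ne'
    have hu := (hP y z).fun_div hden hdne
    have hune : pYZe p q r 0 y z / (pY p y * pZe p q r 0 z) ≠ 0 := by
      rw [hpZe0, hpYZe0]
      exact div_ne_zero (hpYZ y z).ne' (mul_pos (hpY y) (hpZ z)).ne'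
    have hlog := hu.log hune
    have hfull := (hP y z).fun_mul hlog
    convert hfull using 1
    rfl
    rfl
    simp only [hpZe0, hpYZe0]
    field_simp [(hpY y).ne', (hpZ z).ne', (hpYZ y z).ne']
    ring
  have keyF : HasDerivAt (IBfun p q r β)
      ((∑ x, ∑ z, (pX p x * (q x z * r x z) * Real.log (q x z / pZ p q z)
          + pX p x * (q x z * r x z) - pX p x * q x z * S z / pZ p q z))
        - β * ∑ y, ∑ z, (T y z * Real.log (pYZ p q y z / (pY p y * pZ p q z))
          + T y z - pYZ p q y z * S z / pZ p q z)) 0 := by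
    have h1 := HasDerivAt.fun_sum (fun x (_ : x ∈ Finset.univ) =>
      HasDerivAt.fun_sum (fun z (_ : z ∈ Finset.univ) => key1 x z))
    have h2 := HasDerivAt.fun_sum (fun y (_ : y ∈ Finset.univ) =>
      HasDerivAt.fun_sum (fun z (_ : z ∈ Finset.univ) => key2 y z))
    exact h1.fun_sub (h2.const_mul β)
  -- algebraic simplification of the derivative
  have e1 : ∑ x, ∑ z, pX p x * (q x z * r x z) = 0 := by
    refine Finset.sum_eq_zero fun x _ => ?_
    rw [← Finset.mul_sum, hr x, mul_zero]
  have e2 : ∑ z, S z = 0 := by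
    simp only [hS]
    rw [Finset.sum_comm]
    refine Finset.sum_eq_zero fun x _ => ?_
    have h : ∑ z, pX p x * q x z * r x z = pX p x * ∑ z, q x z * r x z := by
      rw [Finset.mul_sum]
      exact Finset.sum_congr rfl fun z _ => mul_assoc _ _ _
    rw [h, hr x, mul_zero]
  have hsum_xz : ∀ z, ∑ x, pX p x * q x z = pZ p q z := fun z => rfl
  have e3 : ∑ x, ∑ z, pX p x * q x z * S z / pZ p q z = 0 := by
    rw [Finset.sum_comm, ← e2]
    refine Finset.sum_congr rfl fun z _ => ?_
    rw [← Finset.sum_div, ← Finset.sum_mul, hsum_xz z]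
    exact mul_div_cancel_left₀ _ (hpZ z).ne'
  have e4 : ∑ y, ∑ z, T y z = 0 := by
    simp only [hT]
    refine Finset.sum_eq_zero fun y _ => ?_
    rw [Finset.sum_comm]
    refine Finset.sum_eq_zero fun x _ => ?_
    have h : ∑ z, p x y * q x z * r x z = p x y * ∑ z, q x z * r x z := by
      rw [Finset.mul_sum]
      exact Finset.sum_congr rfl fun z _ => mul_assoc _ _ _
    rw [h, hr x, mul_zero]
  have hsumy : ∀ z, ∑ y, pYZ p q y z = pZ p q z := by
    intro z
    simp only [pYZ, pZ]
    rw [Finset.sum_comm]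
    refine Finset.sum_congr rfl fun x _ => ?_
    rw [← Finset.sum_mul]
    rfl
  have e5 : ∑ y, ∑ z, pYZ p q y z * S z / pZ p q z = 0 := by
    rw [Finset.sum_comm, ← e2]
    refine Finset.sum_congr rfl fun z _ => ?_
    rw [← Finset.sum_div, ← Finset.sum_mul, hsumy z]
    exact mul_div_cancel_left₀ _ (hpZ z).ne'
  have e6 : ∀ y z, pYZ p q y z * rbarYZ p q r y z = T y z := by
    intro y z
    simp only [hT, rbarYZ]
    rw [mul_comm]
    exact div_mul_cancel₀ _ (hpYZ y z).ne'
  have hfirst : ∑ x, ∑ z, (pX p x * (q x z * r x z) * Real.log (q x z / pZ p q z)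
      + pX p x * (q x z * r x z) - pX p x * q x z * S z / pZ p q z)
      = ∑ x, ∑ z, pX p x * q x z * r x z * Real.log (q x z / pZ p q z) := by
    simp only [Finset.sum_add_distrib, Finset.sum_sub_distrib]
    rw [e1, e3, add_zero, sub_zero]
    exact Finset.sum_congr rfl fun x _ => Finset.sum_congr rfl fun z _ => by ring
  have hsecond : ∑ y, ∑ z, (T y z * Real.log (pYZ p q y z / (pY p y * pZ p q z))
      + T y z - pYZ p q y z * S z / pZ p q z)
      = ∑ y, ∑ z, pYZ p q y z * rbarYZ p q r y z *
          Real.log (pYZ p q y z / (pY p y * pZ p q z)) := by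
    simp only [Finset.sum_add_distrib, Finset.sum_sub_distrib]
    rw [e4, e5, add_zero, sub_zero]
    exact Finset.sum_congr rfl fun y _ => Finset.sum_congr rfl fun z _ => by rw [e6]
  rw [← hfirst, ← hsecond]
  exact keyF
end

section
/- (Second variation of the IB objective, Eq. (21), the key identity behind Lemma 1.) Let r : X × Z → ℝ satisfy ∑_z q(x,z) r(x,z) = 0 for every x. Then F is twice differentiable at ε = 0 and F″(0) = (A(r) − C(r)) − β · (B(r) − C(r)). -/
open Finset Filter Matrix

variable {X Y Z : Type*} [Fintype X] [Fintype Y] [Fintype Z]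

set_option linter.unusedSectionVars false
set_option linter.unusedVariables false

/- ### generic affine × log machinery -/

noncomputable def Sfun {ι : Type*} [Fintype ι] (c a b : ι → ℝ) (ε : ℝ) : ℝ :=
  ∑ i, c i * ((a i + b i * ε) * Real.log (a i + b i * ε))

noncomputable def Sfun' {ι : Type*} [Fintype ι] (c a b : ι → ℝ) (ε : ℝ) : ℝ :=
  ∑ i, c i * (b i * (Real.log (a i + b i * ε) + 1))

noncomputable def Sfun'' {ι : Type*} [Fintype ι] (c a b : ι → ℝ) (ε : ℝ) : ℝ :=
  ∑ i, c i * (b i * (b i / (a i + b i * ε)))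

lemma hasDerivAt_mul_log_affine (a b ε : ℝ) (h : 0 < a + b * ε) :
    HasDerivAt (fun t => (a + b * t) * Real.log (a + b * t)) (b * (Real.log (a + b * ε) + 1)) ε := by
  have hu : HasDerivAt (fun t : ℝ => a + b * t) b ε := by
    simpa using ((hasDerivAt_id ε).const_mul b).const_add a
  have hl : HasDerivAt (fun t : ℝ => Real.log (a + b * t)) ((a + b * ε)⁻¹ * b) ε :=
    by have := (Real.hasDerivAt_log h.ne').comp ε hu; exact this
  have := hu.fun_mul hl
  refine this.congr_deriv ?_
  rw [mul_inv_cancel_left₀ h.ne']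
  ring

lemma hasDerivAt_log_affine' (a b ε : ℝ) (h : 0 < a + b * ε) :
    HasDerivAt (fun t => b * (Real.log (a + b * t) + 1)) (b * (b / (a + b * ε))) ε := by
  have hu : HasDerivAt (fun t : ℝ => a + b * t) b ε := by
    simpa using ((hasDerivAt_id ε).const_mul b).const_add a
  have hl : HasDerivAt (fun t : ℝ => Real.log (a + b * t)) ((a + b * ε)⁻¹ * b) ε :=
    by have := (Real.hasDerivAt_log h.ne').comp ε hu; exact this
  have := (hl.add_const 1).const_mul b
  refine this.congr_deriv ?_
  ring

lemma hasDerivAt_Sfun {ι : Type*} [Fintype ι] (c a b : ι → ℝ) (ε : ℝ)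
    (h : ∀ i, 0 < a i + b i * ε) :
    HasDerivAt (Sfun c a b) (Sfun' c a b ε) ε := by
  unfold Sfun Sfun'
  exact HasDerivAt.fun_sum fun i _ => (hasDerivAt_mul_log_affine (a i) (b i) ε (h i)).const_mul (c i)

lemma hasDerivAt_Sfun' {ι : Type*} [Fintype ι] (c a b : ι → ℝ) (ε : ℝ)
    (h : ∀ i, 0 < a i + b i * ε) :
    HasDerivAt (Sfun' c a b) (Sfun'' c a b ε) ε := by
  unfold Sfun' Sfun''
  exact HasDerivAt.fun_sum fun i _ => (hasDerivAt_log_affine' (a i) (b i) ε (h i)).const_mul (c i)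

/- ### the smooth surrogate G and its derivative G1 -/

noncomputable def Gfun (p : X → Y → ℝ) (q : X → Z → ℝ) (r : X → Z → ℝ) (β ε : ℝ) : ℝ :=
  Sfun (fun i : X × Z => pX p i.1) (fun i => q i.1 i.2) (fun i => q i.1 i.2 * r i.1 i.2) ε
  - Sfun (fun _ : Z => 1) (pZ p q) (fun z => ∑ x, pX p x * (q x z * r x z)) ε
  - β * (Sfun (fun _ : Y × Z => 1) (fun i => pYZ p q i.1 i.2)
            (fun i => ∑ x, p x i.1 * (q x i.2 * r x i.2)) ε
        - (∑ y, pY p y * Real.log (pY p y))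
        - Sfun (fun _ : Z => 1) (pZ p q) (fun z => ∑ x, pX p x * (q x z * r x z)) ε)

noncomputable def G1fun (p : X → Y → ℝ) (q : X → Z → ℝ) (r : X → Z → ℝ) (β ε : ℝ) : ℝ :=
  Sfun' (fun i : X × Z => pX p i.1) (fun i => q i.1 i.2) (fun i => q i.1 i.2 * r i.1 i.2) ε
  - Sfun' (fun _ : Z => 1) (pZ p q) (fun z => ∑ x, pX p x * (q x z * r x z)) ε
  - β * (Sfun' (fun _ : Y × Z => 1) (fun i => pYZ p q i.1 i.2)
            (fun i => ∑ x, p x i.1 * (q x i.2 * r x i.2)) ε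
        - Sfun' (fun _ : Z => 1) (pZ p q) (fun z => ∑ x, pX p x * (q x z * r x z)) ε)

lemma a2eq (p : X → Y → ℝ) (q : X → Z → ℝ) (r : X → Z → ℝ) (ε : ℝ) (z : Z) :
    pZ p q z + (∑ x, pX p x * (q x z * r x z)) * ε = pZe p q r ε z := by
  simp only [pZe, pZ, Finset.sum_mul, ← Finset.sum_add_distrib]
  exact Finset.sum_congr rfl fun x _ => by ring

lemma a3eq (p : X → Y → ℝ) (q : X → Z → ℝ) (r : X → Z → ℝ) (ε : ℝ) (y : Y) (z : Z) :
    pYZ p q y z + (∑ x, p x y * (q x z * r x z)) * ε = pYZe p q r ε y z := by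
  simp only [pYZe, pYZ, Finset.sum_mul, ← Finset.sum_add_distrib]
  exact Finset.sum_congr rfl fun x _ => by ring

section pos
variable [Nonempty X] [Nonempty Y]
variable {p : X → Y → ℝ} {q : X → Z → ℝ} {r : X → Z → ℝ} {ε : ℝ}

lemma hpX (hp : ∀ x y, 0 < p x y) (x : X) : 0 < pX p x :=
  Finset.sum_pos (fun y _ => hp x y) univ_nonempty

lemma hpYpos (hp : ∀ x y, 0 < p x y) (y : Y) : 0 < pY p y :=
  Finset.sum_pos (fun x _ => hp x y) univ_nonempty

lemma hpZe (hp : ∀ x y, 0 < p x y) (hq : ∀ x z, 0 < q x z)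
    (hε : ∀ x z, 0 < 1 + ε * r x z) (z : Z) : 0 < pZe p q r ε z :=
  Finset.sum_pos (fun x _ => mul_pos (hpX hp x) (mul_pos (hq x z) (hε x z))) univ_nonempty

lemma hpYZe (hp : ∀ x y, 0 < p x y) (hq : ∀ x z, 0 < q x z)
    (hε : ∀ x z, 0 < 1 + ε * r x z) (y : Y) (z : Z) : 0 < pYZe p q r ε y z :=
  Finset.sum_pos (fun x _ => mul_pos (hp x y) (mul_pos (hq x z) (hε x z))) univ_nonempty

lemma hrowsum (hqsum : ∀ x, ∑ z, q x z = 1) (hr : ∀ x, ∑ z, q x z * r x z = 0) (y : Y) :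
    ∑ z, pYZe p q r ε y z = pY p y := by
  simp only [pYZe]
  rw [Finset.sum_comm, pY]
  refine Finset.sum_congr rfl fun x _ => ?_
  rw [← Finset.mul_sum]
  have : ∑ z, q x z * (1 + ε * r x z) = 1 := by
    have h1 : ∀ z, q x z * (1 + ε * r x z) = q x z + ε * (q x z * r x z) := fun z => by ring
    simp only [h1, Finset.sum_add_distrib, ← Finset.mul_sum, hqsum x, hr x, mul_zero, add_zero]
  rw [this, mul_one]

lemma hcolsum {z : Z} : ∑ y, pYZe p q r ε y z = pZe p q r ε z := by
  simp only [pYZe, pZe, pX]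
  rw [Finset.sum_comm]
  exact Finset.sum_congr rfl fun x _ => (Finset.sum_mul _ _ _).symm

end pos

section main
variable [Nonempty X] [Nonempty Y] [Nonempty Z]

lemma Sfun1_eq (p : X → Y → ℝ) (q : X → Z → ℝ) (r : X → Z → ℝ) (ε : ℝ) :
    Sfun (fun i : X × Z => pX p i.1) (fun i => q i.1 i.2) (fun i => q i.1 i.2 * r i.1 i.2) ε
      = ∑ x, ∑ z, pX p x * ((q x z * (1 + ε * r x z)) * Real.log (q x z * (1 + ε * r x z))) := by
  rw [Sfun, Fintype.sum_prod_type]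
  exact Finset.sum_congr rfl fun x _ => Finset.sum_congr rfl fun z _ => by
    rw [show q x z + q x z * r x z * ε = q x z * (1 + ε * r x z) from by ring]

lemma Sfun2_eq (p : X → Y → ℝ) (q : X → Z → ℝ) (r : X → Z → ℝ) (ε : ℝ) :
    Sfun (fun _ : Z => (1:ℝ)) (pZ p q) (fun z => ∑ x, pX p x * (q x z * r x z)) ε
      = ∑ z, pZe p q r ε z * Real.log (pZe p q r ε z) := by
  rw [Sfun]
  exact Finset.sum_congr rfl fun z _ => by rw [one_mul, a2eq]

lemma Sfun3_eq (p : X → Y → ℝ) (q : X → Z → ℝ) (r : X → Z → ℝ) (ε : ℝ) :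
    Sfun (fun _ : Y × Z => (1:ℝ)) (fun i => pYZ p q i.1 i.2)
        (fun i => ∑ x, p x i.1 * (q x i.2 * r x i.2)) ε
      = ∑ y, ∑ z, pYZe p q r ε y z * Real.log (pYZe p q r ε y z) := by
  rw [Sfun, Fintype.sum_prod_type]
  exact Finset.sum_congr rfl fun y _ => Finset.sum_congr rfl fun z _ => by rw [one_mul, a3eq]

lemma IB_eq_G (p : X → Y → ℝ) (q : X → Z → ℝ) (r : X → Z → ℝ) (β ε : ℝ)
    (hp : ∀ x y, 0 < p x y) (hq : ∀ x z, 0 < q x z)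
    (hqsum : ∀ x, ∑ z, q x z = 1) (hr : ∀ x, ∑ z, q x z * r x z = 0)
    (hε : ∀ x z, 0 < 1 + ε * r x z) :
    IBfun p q r β ε = Gfun p q r β ε := by
  have hQ : ∀ x z, 0 < q x z * (1 + ε * r x z) := fun x z => mul_pos (hq x z) (hε x z)
  have hZ := hpZe hp hq hε
  have hYZ := hpYZe hp hq hε
  have hYpos := hpYpos (p := p) hp
  rw [IBfun, Gfun]
  have e1 : (∑ x, ∑ z, pX p x * (q x z * (1 + ε * r x z)) *
      Real.log (q x z * (1 + ε * r x z) / pZe p q r ε z))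
      = (∑ x, ∑ z, pX p x * ((q x z * (1 + ε * r x z)) * Real.log (q x z * (1 + ε * r x z))))
        - ∑ z, pZe p q r ε z * Real.log (pZe p q r ε z) := by
    have h1 : ∀ x z, pX p x * (q x z * (1 + ε * r x z)) *
        Real.log (q x z * (1 + ε * r x z) / pZe p q r ε z)
        = pX p x * ((q x z * (1 + ε * r x z)) * Real.log (q x z * (1 + ε * r x z)))
          - pX p x * (q x z * (1 + ε * r x z)) * Real.log (pZe p q r ε z) := by
      intro x z
      rw [Real.log_div (hQ x z).ne' (hZ z).ne']
      ring
    simp only [h1, Finset.sum_sub_distrib]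
    congr 1
    rw [Finset.sum_comm]
    exact Finset.sum_congr rfl fun z _ => by
      rw [← Finset.sum_mul]; rfl
  have e2 : (∑ y, ∑ z, pYZe p q r ε y z *
      Real.log (pYZe p q r ε y z / (pY p y * pZe p q r ε z)))
      = (∑ y, ∑ z, pYZe p q r ε y z * Real.log (pYZe p q r ε y z))
        - (∑ y, pY p y * Real.log (pY p y))
        - ∑ z, pZe p q r ε z * Real.log (pZe p q r ε z) := by
    have h1 : ∀ y z, pYZe p q r ε y z *
        Real.log (pYZe p q r ε y z / (pY p y * pZe p q r ε z))
        = pYZe p q r ε y z * Real.log (pYZe p q r ε y z)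
          - pYZe p q r ε y z * Real.log (pY p y)
          - pYZe p q r ε y z * Real.log (pZe p q r ε z) := by
      intro y z
      rw [Real.log_div (hYZ y z).ne' (mul_pos (hYpos y) (hZ z)).ne',
        Real.log_mul (hYpos y).ne' (hZ z).ne']
      ring
    simp only [h1, Finset.sum_sub_distrib]
    congr 1
    · congr 1
      exact Finset.sum_congr rfl fun y _ => by
        rw [← Finset.sum_mul, hrowsum hqsum hr]
    · rw [Finset.sum_comm]
      exact Finset.sum_congr rfl fun z _ => by
        rw [← Finset.sum_mul, hcolsum]
  rw [e1, e2, Sfun1_eq, Sfun2_eq, Sfun3_eq]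

end main

section main2
variable [Nonempty X] [Nonempty Y] [Nonempty Z]

lemma pos1 {p : X → Y → ℝ} {q : X → Z → ℝ} {r : X → Z → ℝ} {ε : ℝ}
    (hq : ∀ x z, 0 < q x z) (hε : ∀ x z, 0 < 1 + ε * r x z) :
    ∀ i : X × Z, 0 < q i.1 i.2 + q i.1 i.2 * r i.1 i.2 * ε := by
  intro i
  have : q i.1 i.2 + q i.1 i.2 * r i.1 i.2 * ε = q i.1 i.2 * (1 + ε * r i.1 i.2) := by ring
  rw [this]; exact mul_pos (hq _ _) (hε _ _)

lemma pos2 {p : X → Y → ℝ} {q : X → Z → ℝ} {r : X → Z → ℝ} {ε : ℝ}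
    (hp : ∀ x y, 0 < p x y) (hq : ∀ x z, 0 < q x z) (hε : ∀ x z, 0 < 1 + ε * r x z) :
    ∀ z : Z, 0 < pZ p q z + (∑ x, pX p x * (q x z * r x z)) * ε := by
  intro z; rw [a2eq]; exact hpZe hp hq hε z

lemma pos3 {p : X → Y → ℝ} {q : X → Z → ℝ} {r : X → Z → ℝ} {ε : ℝ}
    (hp : ∀ x y, 0 < p x y) (hq : ∀ x z, 0 < q x z) (hε : ∀ x z, 0 < 1 + ε * r x z) :
    ∀ i : Y × Z, 0 < pYZ p q i.1 i.2 + (∑ x, p x i.1 * (q x i.2 * r x i.2)) * ε := by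
  intro i; rw [a3eq]; exact hpYZe hp hq hε i.1 i.2

lemma hasDerivAt_Gfun (p : X → Y → ℝ) (q : X → Z → ℝ) (r : X → Z → ℝ) (β ε : ℝ)
    (hp : ∀ x y, 0 < p x y) (hq : ∀ x z, 0 < q x z) (hε : ∀ x z, 0 < 1 + ε * r x z) :
    HasDerivAt (Gfun p q r β) (G1fun p q r β ε) ε := by
  have h1 := hasDerivAt_Sfun (fun i : X × Z => pX p i.1) (fun i => q i.1 i.2)
      (fun i => q i.1 i.2 * r i.1 i.2) ε (pos1 (p := p) hq hε)
  have h2 := hasDerivAt_Sfun (fun _ : Z => (1:ℝ)) (pZ p q)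
      (fun z => ∑ x, pX p x * (q x z * r x z)) ε (pos2 hp hq hε)
  have h3 := hasDerivAt_Sfun (fun _ : Y × Z => (1:ℝ)) (fun i => pYZ p q i.1 i.2)
      (fun i => ∑ x, p x i.1 * (q x i.2 * r x i.2)) ε (pos3 hp hq hε)
  unfold Gfun G1fun
  exact (h1.sub h2).sub (((h3.sub_const _).sub h2).const_mul β)

lemma hasDerivAt_G1fun (p : X → Y → ℝ) (q : X → Z → ℝ) (r : X → Z → ℝ) (β ε : ℝ)
    (hp : ∀ x y, 0 < p x y) (hq : ∀ x z, 0 < q x z) (hε : ∀ x z, 0 < 1 + ε * r x z) :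
    HasDerivAt (G1fun p q r β)
      (Sfun'' (fun i : X × Z => pX p i.1) (fun i => q i.1 i.2) (fun i => q i.1 i.2 * r i.1 i.2) ε
       - Sfun'' (fun _ : Z => (1:ℝ)) (pZ p q) (fun z => ∑ x, pX p x * (q x z * r x z)) ε
       - β * (Sfun'' (fun _ : Y × Z => (1:ℝ)) (fun i => pYZ p q i.1 i.2)
            (fun i => ∑ x, p x i.1 * (q x i.2 * r x i.2)) ε
          - Sfun'' (fun _ : Z => (1:ℝ)) (pZ p q) (fun z => ∑ x, pX p x * (q x z * r x z)) ε)) ε := by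
  have h1 := hasDerivAt_Sfun' (fun i : X × Z => pX p i.1) (fun i => q i.1 i.2)
      (fun i => q i.1 i.2 * r i.1 i.2) ε (pos1 (p := p) hq hε)
  have h2 := hasDerivAt_Sfun' (fun _ : Z => (1:ℝ)) (pZ p q)
      (fun z => ∑ x, pX p x * (q x z * r x z)) ε (pos2 hp hq hε)
  have h3 := hasDerivAt_Sfun' (fun _ : Y × Z => (1:ℝ)) (fun i => pYZ p q i.1 i.2)
      (fun i => ∑ x, p x i.1 * (q x i.2 * r x i.2)) ε (pos3 hp hq hε)
  unfold G1fun
  exact (h1.sub h2).sub ((h3.sub h2).const_mul β)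

lemma SA0 (p : X → Y → ℝ) (q : X → Z → ℝ) (r : X → Z → ℝ) (hq : ∀ x z, 0 < q x z) :
    Sfun'' (fun i : X × Z => pX p i.1) (fun i => q i.1 i.2) (fun i => q i.1 i.2 * r i.1 i.2) 0
      = termA p q r := by
  rw [Sfun'', Fintype.sum_prod_type, termA]
  refine Finset.sum_congr rfl fun x _ => Finset.sum_congr rfl fun z _ => ?_
  have hqz := (hq x z).ne'
  field_simp
  ring

lemma SC0 (p : X → Y → ℝ) (q : X → Z → ℝ) (r : X → Z → ℝ) :
    Sfun'' (fun _ : Z => (1:ℝ)) (pZ p q) (fun z => ∑ x, pX p x * (q x z * r x z)) 0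
      = termC p q r := by
  rw [Sfun'', termC]
  refine Finset.sum_congr rfl fun z _ => ?_
  rw [show (∑ x, pX p x * (q x z * r x z)) = ∑ x, pX p x * q x z * r x z from
    Finset.sum_congr rfl fun x _ => (mul_assoc _ _ _).symm]
  rw [one_mul, mul_zero, add_zero]
  ring

lemma SB0 (p : X → Y → ℝ) (q : X → Z → ℝ) (r : X → Z → ℝ) :
    Sfun'' (fun _ : Y × Z => (1:ℝ)) (fun i => pYZ p q i.1 i.2)
        (fun i => ∑ x, p x i.1 * (q x i.2 * r x i.2)) 0 = termB p q r := by
  rw [Sfun'', Fintype.sum_prod_type, termB]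
  refine Finset.sum_congr rfl fun y _ => Finset.sum_congr rfl fun z _ => ?_
  rw [show (∑ x, p x y * (q x z * r x z)) = ∑ x, p x y * q x z * r x z from
    Finset.sum_congr rfl fun x _ => (mul_assoc _ _ _).symm]
  rw [one_mul, mul_zero, add_zero]
  ring

end main2

/-- Second variation of the IB objective, Eq. (21):
F is twice differentiable at ε = 0 and F″(0) = (A − C) − β (B − C). -/
theorem second_variation_IB [Nonempty X] [Nonempty Y] [Nonempty Z]
    (p : X → Y → ℝ) (q : X → Z → ℝ)
    (hp : ∀ x y, 0 < p x y) (hpsum : ∑ x, ∑ y, p x y = 1)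
    (hq : ∀ x z, 0 < q x z) (hqsum : ∀ x, ∑ z, q x z = 1)
    (β : ℝ) (r : X → Z → ℝ) (hr : ∀ x, ∑ z, q x z * r x z = 0) :
    (∀ᶠ ε in nhds (0 : ℝ), DifferentiableAt ℝ (IBfun p q r β) ε) ∧
    DifferentiableAt ℝ (deriv (IBfun p q r β)) 0 ∧
    deriv (deriv (IBfun p q r β)) 0 =
      (termA p q r - termC p q r) - β * (termB p q r - termC p q r) := by
  set U : Set ℝ := {ε | ∀ x z, 0 < 1 + ε * r x z} with hUdef
  have hUopen : IsOpen U := by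
    have : U = ⋂ x, ⋂ z, {ε : ℝ | 0 < 1 + ε * r x z} := by
      ext ε; simp [hUdef, Set.mem_iInter]
    rw [this]
    exact isOpen_iInter_of_finite fun x => isOpen_iInter_of_finite fun z =>
      isOpen_lt continuous_const (continuous_const.add (continuous_id.mul continuous_const))
  have h0U : (0 : ℝ) ∈ U := by intro x z; norm_num
  have hUnhds : U ∈ nhds (0 : ℝ) := hUopen.mem_nhds h0U
  -- on U, IBfun has derivative G1fun
  have hD : ∀ ε ∈ U, HasDerivAt (IBfun p q r β) (G1fun p q r β ε) ε := by
    intro ε hε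
    have hG := hasDerivAt_Gfun p q r β ε hp hq hε
    apply hG.congr_of_eventuallyEq
    filter_upwards [hUopen.mem_nhds hε] with ε' hε'
    exact IB_eq_G p q r β ε' hp hq hqsum hr hε'
  refine ⟨?_, ?_, ?_⟩
  · filter_upwards [hUnhds] with ε hε
    exact (hD ε hε).differentiableAt
  · have hev : deriv (IBfun p q r β) =ᶠ[nhds 0] G1fun p q r β := by
      filter_upwards [hUnhds] with ε hε
      exact (hD ε hε).deriv
    have hG1 := hasDerivAt_G1fun p q r β 0 hp hq h0U
    exact (hG1.congr_of_eventuallyEq hev).differentiableAt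
  · have hev : deriv (IBfun p q r β) =ᶠ[nhds 0] G1fun p q r β := by
      filter_upwards [hUnhds] with ε hε
      exact (hD ε hε).deriv
    have hG1 := hasDerivAt_G1fun p q r β 0 hp hq h0U
    rw [(hG1.congr_of_eventuallyEq hev).deriv, SA0 p q r hq, SC0 p q r, SB0 p q r]
end

section
/- (Lemma F.1: invariance of the threshold quotient under addition of a global representation shift.) Let r : X × Z → ℝ and s : Z → ℝ, and define r′(x,z) = r(x,z) + s(z). Then A(r′) − C(r′) = A(r) − C(r) and B(r′) − C(r′) = B(r) − C(r). In particular the quotient (A(r) − C(r)) / (B(r) − C(r)) is invariant under r ↦ r + s. -/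
open Finset Filter Matrix

variable {X Y Z : Type*} [Fintype X] [Fintype Y] [Fintype Z]

/-- Lemma F.1: invariance of the threshold quotient under a global shift r ↦ r + s. -/
theorem invariance_global_shift [Nonempty X] [Nonempty Y] [Nonempty Z]
    (p : X → Y → ℝ) (q : X → Z → ℝ)
    (hp : ∀ x y, 0 < p x y) (hpsum : ∑ x, ∑ y, p x y = 1)
    (hq : ∀ x z, 0 < q x z) (hqsum : ∀ x, ∑ z, q x z = 1)
    (r : X → Z → ℝ) (s : Z → ℝ) (r' : X → Z → ℝ)
    (hr' : ∀ x z, r' x z = r x z + s z) :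
    termA p q r' - termC p q r' = termA p q r - termC p q r ∧
    termB p q r' - termC p q r' = termB p q r - termC p q r ∧
    (termA p q r - termC p q r) / (termB p q r - termC p q r)
      = (termA p q r' - termC p q r') / (termB p q r' - termC p q r') := by
  have hpX : ∀ x, 0 < pX p x := fun x =>
    Finset.sum_pos (fun y _ => hp x y) Finset.univ_nonempty
  have hpZ : ∀ z, 0 < pZ p q z := fun z =>
    Finset.sum_pos (fun x _ => mul_pos (hpX x) (hq x z)) Finset.univ_nonempty
  have hpYZ : ∀ y z, 0 < pYZ p q y z := fun y z =>
    Finset.sum_pos (fun x _ => mul_pos (hp x y) (hq x z)) Finset.univ_nonempty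
  set S : Z → ℝ := fun z => ∑ x, pX p x * q x z * r x z with hSdef
  set T : Y → Z → ℝ := fun y z => ∑ x, p x y * q x z * r x z with hTdef
  set D : ℝ := ∑ z, (2 * S z * s z + pZ p q z * s z ^ 2) with hDdef
  have hTS : ∀ z, ∑ y, T y z = S z := by
    intro z
    rw [hTdef, hSdef]
    rw [Finset.sum_comm]
    apply Finset.sum_congr rfl
    intro x _
    simp only [pX, Finset.sum_mul]
  have hPYZ_sum : ∀ z, ∑ y, pYZ p q y z = pZ p q z := by
    intro z
    unfold pYZ pZ
    rw [Finset.sum_comm]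
    apply Finset.sum_congr rfl
    intro x _
    simp only [pX, Finset.sum_mul]
  -- A
  have hshiftA : (∑ x, ∑ z, pX p x * q x z * r x z * (2 * s z))
      + (∑ x, ∑ z, pX p x * q x z * s z ^ 2) = D := by
    rw [Finset.sum_comm (f := fun x z => pX p x * q x z * r x z * (2 * s z)),
        Finset.sum_comm (f := fun x z => pX p x * q x z * s z ^ 2),
        hDdef, ← Finset.sum_add_distrib]
    apply Finset.sum_congr rfl
    intro z _
    rw [← Finset.sum_mul, ← Finset.sum_mul, pZ, hSdef]
    ring
  have hA : termA p q r' = termA p q r + D := by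
    have key : ∀ x z, pX p x * q x z * r' x z ^ 2
        = pX p x * q x z * r x z ^ 2
          + (pX p x * q x z * r x z * (2 * s z) + pX p x * q x z * s z ^ 2) := by
      intro x z; rw [hr']; ring
    unfold termA
    simp_rw [key, Finset.sum_add_distrib]
    rw [hshiftA]
  -- C
  have hCin : ∀ z, ∑ x, pX p x * q x z * r' x z = S z + pZ p q z * s z := by
    intro z
    have : ∀ x, pX p x * q x z * r' x z
        = pX p x * q x z * r x z + (pX p x * q x z) * s z := by
      intro x; rw [hr']; ring
    simp_rw [this, Finset.sum_add_distrib, ← Finset.sum_mul]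
    rw [pZ, hSdef]
  have hC : termC p q r' = termC p q r + D := by
    unfold termC
    rw [hDdef, ← Finset.sum_add_distrib]
    apply Finset.sum_congr rfl
    intro z _
    rw [hCin z]
    have hz := (hpZ z).ne'
    rw [hSdef]
    field_simp
    ring
  -- B
  have hBin : ∀ y z, ∑ x, p x y * q x z * r' x z = T y z + pYZ p q y z * s z := by
    intro y z
    have : ∀ x, p x y * q x z * r' x z
        = p x y * q x z * r x z + (p x y * q x z) * s z := by
      intro x; rw [hr']; ring
    simp_rw [this, Finset.sum_add_distrib, ← Finset.sum_mul]
    rw [pYZ, hTdef]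
  have hshiftB : (∑ y, ∑ z, T y z * (2 * s z))
      + (∑ y, ∑ z, pYZ p q y z * s z ^ 2) = D := by
    rw [Finset.sum_comm (f := fun y z => T y z * (2 * s z)),
        Finset.sum_comm (f := fun y z => pYZ p q y z * s z ^ 2),
        hDdef, ← Finset.sum_add_distrib]
    apply Finset.sum_congr rfl
    intro z _
    rw [← Finset.sum_mul, ← Finset.sum_mul, hTS z, hPYZ_sum z]
    ring
  have hB : termB p q r' = termB p q r + D := by
    have key : ∀ y z, (∑ x, p x y * q x z * r' x z) ^ 2 / pYZ p q y z
        = (∑ x, p x y * q x z * r x z) ^ 2 / pYZ p q y z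
          + (T y z * (2 * s z) + pYZ p q y z * s z ^ 2) := by
      intro y z
      rw [hBin y z]
      have hz := (hpYZ y z).ne'
      rw [hTdef]
      field_simp
      ring
    unfold termB
    simp_rw [key, Finset.sum_add_distrib]
    rw [hshiftB]
  refine ⟨by linarith, by linarith, ?_⟩
  congr 1 <;> linarith
end

section
/- (Lemma 1: the second-variation nonnegativity condition is equivalent to β ≤ G.) Let β ∈ ℝ and let Q denote the set of r : X × Z → ℝ with ∑_z q(x,z) r(x,z) = 0 for every x. Then the following are equivalent: (1) for every r ∈ Q, (A(r) − C(r)) − β · (B(r) − C(r)) ≥ 0; (2) for every r ∈ Q with B(r) − C(r) > 0, β ≤ (A(r) − C(r)) / (B(r) − C(r)). -/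
open Finset Filter Matrix

variable {X Y Z : Type*} [Fintype X] [Fintype Y] [Fintype Z]

lemma C_le_A {X Y Z : Type*} [Fintype X] [Fintype Y] [Fintype Z] [Nonempty Y]
    (p : X → Y → ℝ) (q : X → Z → ℝ)
    (hp : ∀ x y, 0 < p x y) (hq : ∀ x z, 0 < q x z) (r : X → Z → ℝ) :
    termC p q r ≤ termA p q r := by
  have hpx : ∀ x, 0 < pX p x := fun x => Finset.sum_pos (fun y _ => hp x y) Finset.univ_nonempty
  rw [termA, Finset.sum_comm]
  refine Finset.sum_le_sum fun z _ => ?_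
  have h := sq_sum_div_le_sum_sq_div Finset.univ (fun x => pX p x * q x z * r x z)
      (g := fun x => pX p x * q x z) (fun x _ => mul_pos (hpx x) (hq x z))
  rw [pZ]
  refine h.trans_eq (Finset.sum_congr rfl fun x _ => ?_)
  have hne : pX p x * q x z ≠ 0 := (mul_pos (hpx x) (hq x z)).ne'
  field_simp

lemma C_le_B {X Y Z : Type*} [Fintype X] [Fintype Y] [Fintype Z] [Nonempty X]
    (p : X → Y → ℝ) (q : X → Z → ℝ)
    (hp : ∀ x y, 0 < p x y) (hq : ∀ x z, 0 < q x z) (r : X → Z → ℝ) :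
    termC p q r ≤ termB p q r := by
  rw [termB, Finset.sum_comm]
  refine Finset.sum_le_sum fun z _ => ?_
  have h := sq_sum_div_le_sum_sq_div Finset.univ (fun y => ∑ x, p x y * q x z * r x z)
      (g := fun y => pYZ p q y z)
      (fun y _ => Finset.sum_pos (fun x _ => mul_pos (hp x y) (hq x z)) Finset.univ_nonempty)
  refine le_trans (le_of_eq ?_) h
  congr 1
  · congr 1
    rw [Finset.sum_comm]
    refine Finset.sum_congr rfl fun x _ => ?_
    rw [pX, Finset.sum_mul, Finset.sum_mul]
  · rw [pZ, show (∑ y, pYZ p q y z) = ∑ y, ∑ x, p x y * q x z from rfl, Finset.sum_comm]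
    refine Finset.sum_congr rfl fun x _ => ?_
    rw [pX, Finset.sum_mul]

/-- Lemma 1: the second-variation nonnegativity condition is equivalent to β ≤ G. -/
theorem second_variation_nonneg_iff [Nonempty X] [Nonempty Y] [Nonempty Z]
    (p : X → Y → ℝ) (q : X → Z → ℝ)
    (hp : ∀ x y, 0 < p x y) (hpsum : ∑ x, ∑ y, p x y = 1)
    (hq : ∀ x z, 0 < q x z) (hqsum : ∀ x, ∑ z, q x z = 1)
    (β : ℝ) :
    (∀ r : X → Z → ℝ, (∀ x, ∑ z, q x z * r x z = 0) →
        (termA p q r - termC p q r) - β * (termB p q r - termC p q r) ≥ 0) ↔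
    (∀ r : X → Z → ℝ, (∀ x, ∑ z, q x z * r x z = 0) →
        0 < termB p q r - termC p q r →
          β ≤ (termA p q r - termC p q r) / (termB p q r - termC p q r)) := by
  constructor
  · intro h r hr hpos
    have := h r hr
    rw [ge_iff_le, sub_nonneg] at this
    rw [le_div_iff₀ hpos]
    linarith
  · intro h r hr
    rcases lt_or_ge 0 (termB p q r - termC p q r) with hpos | hnp
    · have := h r hr hpos
      rw [le_div_iff₀ hpos] at this
      linarith
    · have h1 := C_le_A p q hp hq r
      have h2 := C_le_B p q hp hq r
      have hz : termB p q r - termC p q r = 0 := le_antisymm hnp (by linarith)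
      rw [hz]
      linarith
end

section
/- (Theorem 2(i), identity ρ_r = ρ_s between the representational maximum correlation and its one-function form.) Assume X has at least two elements and Y has at least two elements. Let S₁ be the set of pairs (f : X × Z → ℝ, g : Y × Z → ℝ) such that ∑_x p(x) q(x,z) f(x,z) = 0 for every z, ∑_y p(y,z) g(y,z) = 0 for every z, A(f) = 1, and ∑_{y,z} p(y,z) g(y,z)² = 1. Define the representational maximum correlation ρ_r = sSup { ∑_{x,y,z} p(x,y) q(x,z) f(x,z) g(y,z) : (f,g) ∈ S₁ }, and define ρ_s² = sSup { B(f) : f : X × Z → ℝ with ∑_x p(x) q(x,z) f(x,z) = 0 for every z and A(f) = 1 }. Then ρ_r ≥ 0 and ρ_r² = ρ_s². -/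
open Finset Filter Matrix

variable {X Y Z : Type*} [Fintype X] [Fintype Y] [Fintype Z]

/-- ρ_s² : the one-function form of the representational maximum correlation squared -/
noncomputable def rhoS2 (p : X → Y → ℝ) (q : X → Z → ℝ) : ℝ :=
  sSup {b : ℝ | ∃ f : X → Z → ℝ,
    (∀ z, ∑ x, pX p x * q x z * f x z = 0) ∧ termA p q f = 1 ∧ b = termB p q f}

/-- representational maximum correlation ρ_r(X,Y;Z) -/
noncomputable def rhoR (p : X → Y → ℝ) (q : X → Z → ℝ) : ℝ :=
  sSup {c : ℝ | ∃ f : X → Z → ℝ, ∃ g : Y → Z → ℝ,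
    (∀ z, ∑ x, pX p x * q x z * f x z = 0) ∧
    (∀ z, ∑ y, pYZ p q y z * g y z = 0) ∧
    termA p q f = 1 ∧ (∑ y, ∑ z, pYZ p q y z * g y z ^ 2) = 1 ∧
    c = ∑ x, ∑ y, ∑ z, p x y * q x z * f x z * g y z}

set_option linter.unusedSectionVars false

private lemma cs_weighted {ι : Type*} [Fintype ι] (w u v : ι → ℝ) (hw : ∀ i, 0 ≤ w i) :
    (∑ i, w i * u i * v i) ^ 2 ≤ (∑ i, w i * u i ^ 2) * (∑ i, w i * v i ^ 2) := by
  have h := Finset.sum_mul_sq_le_sq_mul_sq Finset.univ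
    (fun i => Real.sqrt (w i) * u i) (fun i => Real.sqrt (w i) * v i)
  have e1 : ∀ i : ι, (Real.sqrt (w i) * u i) * (Real.sqrt (w i) * v i) = w i * u i * v i := by
    intro i; rw [mul_mul_mul_comm, Real.mul_self_sqrt (hw i), mul_assoc]
  have e2 : ∀ i : ι, (Real.sqrt (w i) * u i) ^ 2 = w i * u i ^ 2 := by
    intro i; rw [mul_pow, Real.sq_sqrt (hw i)]
  have e3 : ∀ i : ι, (Real.sqrt (w i) * v i) ^ 2 = w i * v i ^ 2 := by
    intro i; rw [mul_pow, Real.sq_sqrt (hw i)]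
  simpa only [e1, e2, e3] using h

private lemma rot3 {A B C : Type*} [Fintype A] [Fintype B] [Fintype C] (a : A → B → C → ℝ) :
    ∑ x, ∑ y, ∑ z, a x y z = ∑ y, ∑ z, ∑ x, a x y z := by
  calc ∑ x, ∑ y, ∑ z, a x y z = ∑ y, ∑ x, ∑ z, a x y z := Finset.sum_comm
    _ = ∑ y, ∑ z, ∑ x, a x y z := Finset.sum_congr rfl fun _ _ => Finset.sum_comm

section main
variable (p : X → Y → ℝ) (q : X → Z → ℝ)

private lemma termA_smul (c : ℝ) (f : X → Z → ℝ) :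
    termA p q (fun x z => c * f x z) = c ^ 2 * termA p q f := by
  simp only [termA]
  rw [Finset.mul_sum]
  refine Finset.sum_congr rfl fun x _ => ?_
  rw [Finset.mul_sum]
  exact Finset.sum_congr rfl fun z _ => by ring

private lemma termB_le_termA [Nonempty X] (hp : ∀ x y, 0 < p x y) (hq : ∀ x z, 0 < q x z)
    (f : X → Z → ℝ) : termB p q f ≤ termA p q f := by
  have hpYZpos : ∀ y z, 0 < pYZ p q y z := fun y z =>
    Finset.sum_pos (fun x _ => mul_pos (hp x y) (hq x z)) univ_nonempty
  have key : ∀ y z, (∑ x, p x y * q x z * f x z) ^ 2 / pYZ p q y z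
      ≤ ∑ x, p x y * q x z * f x z ^ 2 := by
    intro y z
    rw [div_le_iff₀ (hpYZpos y z)]
    have h := cs_weighted (fun x => p x y * q x z) (fun x => f x z) (fun _ => 1)
      (fun x => (mul_pos (hp x y) (hq x z)).le)
    simpa [pYZ] using h
  calc termB p q f ≤ ∑ y, ∑ z, ∑ x, p x y * q x z * f x z ^ 2 :=
        Finset.sum_le_sum fun y _ => Finset.sum_le_sum fun z _ => key y z
    _ = ∑ x, ∑ y, ∑ z, p x y * q x z * f x z ^ 2 := (rot3 _).symm
    _ = termA p q f := by
        refine Finset.sum_congr rfl fun x _ => ?_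
        rw [Finset.sum_comm]
        refine Finset.sum_congr rfl fun z _ => ?_
        simp only [termA, pX, Finset.sum_mul]

-- value rewrite
private lemma val_eq (f : X → Z → ℝ) (g : Y → Z → ℝ) :
    ∑ x, ∑ y, ∑ z, p x y * q x z * f x z * g y z
      = ∑ y, ∑ z, (∑ x, p x y * q x z * f x z) * g y z := by
  rw [rot3]
  refine Finset.sum_congr rfl fun y _ => Finset.sum_congr rfl fun z _ => ?_
  rw [Finset.sum_mul]

-- sum over y of the S function
private lemma S_sum (f : X → Z → ℝ) (hf : ∀ z, ∑ x, pX p x * q x z * f x z = 0) (z : Z) :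
    ∑ y, ∑ x, p x y * q x z * f x z = 0 := by
  rw [Finset.sum_comm]
  have : ∀ x, ∑ y, p x y * q x z * f x z = pX p x * q x z * f x z := by
    intro x; simp only [pX, Finset.sum_mul]
  rw [Finset.sum_congr rfl fun x _ => this x, hf z]

end main

/-- Theorem 2(i): ρ_r ≥ 0 and ρ_r² = ρ_s². -/
theorem rhoR_eq_rhoS [Nontrivial X] [Nontrivial Y] [Nonempty Z]
    (p : X → Y → ℝ) (q : X → Z → ℝ)
    (hp : ∀ x y, 0 < p x y) (hpsum : ∑ x, ∑ y, p x y = 1)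
    (hq : ∀ x z, 0 < q x z) (hqsum : ∀ x, ∑ z, q x z = 1) :
    0 ≤ rhoR p q ∧ rhoR p q ^ 2 = rhoS2 p q := by

  classical
  have hpXpos : ∀ x, 0 < pX p x := fun x =>
    Finset.sum_pos (fun y _ => hp x y) univ_nonempty
  have hpYZpos : ∀ y z, 0 < pYZ p q y z := fun y z =>
    Finset.sum_pos (fun x _ => mul_pos (hp x y) (hq x z)) univ_nonempty
  set SB : Set ℝ := {b : ℝ | ∃ f : X → Z → ℝ,
    (∀ z, ∑ x, pX p x * q x z * f x z = 0) ∧ termA p q f = 1 ∧ b = termB p q f} with hSBdef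
  set SR : Set ℝ := {c : ℝ | ∃ f : X → Z → ℝ, ∃ g : Y → Z → ℝ,
    (∀ z, ∑ x, pX p x * q x z * f x z = 0) ∧
    (∀ z, ∑ y, pYZ p q y z * g y z = 0) ∧
    termA p q f = 1 ∧ (∑ y, ∑ z, pYZ p q y z * g y z ^ 2) = 1 ∧
    c = ∑ x, ∑ y, ∑ z, p x y * q x z * f x z * g y z} with hSRdef
  have hS2 : rhoS2 p q = sSup SB := rfl
  have hRR : rhoR p q = sSup SR := rfl
  have hBnonneg : ∀ f : X → Z → ℝ, 0 ≤ termB p q f := fun f =>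
    Finset.sum_nonneg fun y _ => Finset.sum_nonneg fun z _ =>
      div_nonneg (sq_nonneg _) (hpYZpos y z).le
  -- existence of a feasible f
  obtain ⟨x₁, x₂, hx12⟩ := exists_pair_ne X
  obtain ⟨z₀⟩ := (inferInstance : Nonempty Z)
  have hfeas : ∃ f : X → Z → ℝ, (∀ z, ∑ x, pX p x * q x z * f x z = 0) ∧ termA p q f = 1 := by
    set ind : X → ℝ := fun x => (if x = x₁ then 1 else 0) - (if x = x₂ then 1 else 0) with hind
    set h : X → Z → ℝ := fun x z => ind x / (pX p x * q x z) with hh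
    have hwne : ∀ x z, pX p x * q x z ≠ 0 := fun x z =>
      (mul_pos (hpXpos x) (hq x z)).ne'
    have hcon : ∀ z, ∑ x, pX p x * q x z * h x z = 0 := by
      intro z
      have : ∀ x, pX p x * q x z * h x z = ind x := by
        intro x
        rw [hh, mul_comm, div_mul_cancel₀ _ (hwne x z)]
      rw [Finset.sum_congr rfl fun x _ => this x]
      simp [hind, Finset.sum_sub_distrib, hx12]
    have hA1 : h x₁ z₀ ^ 2 = (1 / (pX p x₁ * q x₁ z₀)) ^ 2 := by
      simp [hh, hind, hx12]
    have hApos : 0 < termA p q h := by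
      have hterm : ∀ x z, 0 ≤ pX p x * q x z * h x z ^ 2 := fun x z =>
        mul_nonneg (mul_pos (hpXpos x) (hq x z)).le (sq_nonneg _)
      refine Finset.sum_pos' (fun x _ => Finset.sum_nonneg fun z _ => hterm x z) ⟨x₁, mem_univ _, ?_⟩
      refine Finset.sum_pos' (fun z _ => hterm x₁ z) ⟨z₀, mem_univ _, ?_⟩
      rw [hA1]
      have := mul_pos (hpXpos x₁) (hq x₁ z₀)
      positivity
    set c : ℝ := (Real.sqrt (termA p q h))⁻¹ with hc
    refine ⟨fun x z => c * h x z, ?_, ?_⟩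
    · intro z
      have : ∑ x, pX p x * q x z * (c * h x z) = c * ∑ x, pX p x * q x z * h x z := by
        rw [Finset.mul_sum]; exact Finset.sum_congr rfl fun x _ => by ring
      rw [this, hcon z, mul_zero]
    · rw [termA_smul, hc, inv_pow, Real.sq_sqrt hApos.le, inv_mul_cancel₀ hApos.ne']
  obtain ⟨f₀, hf₀1, hf₀2⟩ := hfeas
  -- bounds: every b ∈ SB is in [0,1]
  have hSBub : ∀ b ∈ SB, b ≤ 1 := by
    rintro b ⟨f, h1, h2, rfl⟩
    calc termB p q f ≤ termA p q f := termB_le_termA p q hp hq f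
      _ = 1 := h2
  have hSBbdd : BddAbove SB := ⟨1, hSBub⟩
  have hSBne : SB.Nonempty := ⟨termB p q f₀, f₀, hf₀1, hf₀2, rfl⟩
  have hS2nonneg : 0 ≤ rhoS2 p q := by
    rw [hS2]
    exact le_trans (hBnonneg f₀) (le_csSup hSBbdd ⟨f₀, hf₀1, hf₀2, rfl⟩)
  -- CS upper bound for pairs
  have hpair : ∀ (f : X → Z → ℝ) (g : Y → Z → ℝ),
      (∑ y, ∑ z, pYZ p q y z * g y z ^ 2) = 1 →
      ∑ x, ∑ y, ∑ z, p x y * q x z * f x z * g y z ≤ Real.sqrt (termB p q f) := by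
    intro f g hg2
    rw [val_eq]
    have hcs := cs_weighted (ι := Y × Z) (fun i => pYZ p q i.1 i.2)
      (fun i => (∑ x, p x i.1 * q x i.2 * f x i.2) / pYZ p q i.1 i.2)
      (fun i => g i.1 i.2) (fun i => (hpYZpos i.1 i.2).le)
    have e1 : ∀ i : Y × Z, pYZ p q i.1 i.2 *
        ((∑ x, p x i.1 * q x i.2 * f x i.2) / pYZ p q i.1 i.2) * g i.1 i.2
        = (∑ x, p x i.1 * q x i.2 * f x i.2) * g i.1 i.2 := by
      intro i; rw [mul_div_cancel₀ _ (hpYZpos i.1 i.2).ne']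
    have e2 : ∀ i : Y × Z, pYZ p q i.1 i.2 *
        ((∑ x, p x i.1 * q x i.2 * f x i.2) / pYZ p q i.1 i.2) ^ 2
        = (∑ x, p x i.1 * q x i.2 * f x i.2) ^ 2 / pYZ p q i.1 i.2 := by
      intro i
      have hne := (hpYZpos i.1 i.2).ne'
      field_simp
    simp only [e1, e2] at hcs
    have hcs2 : (∑ y, ∑ z, (∑ x, p x y * q x z * f x z) * g y z) ^ 2
        ≤ (∑ y, ∑ z, (∑ x, p x y * q x z * f x z) ^ 2 / pYZ p q y z)
          * (∑ y, ∑ z, pYZ p q y z * g y z ^ 2) := by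
      simpa only [Fintype.sum_prod_type] using hcs
    rw [hg2, mul_one] at hcs2
    have hcs3 : (∑ y, ∑ z, (∑ x, p x y * q x z * f x z) * g y z) ^ 2 ≤ termB p q f := hcs2
    calc (∑ y, ∑ z, (∑ x, p x y * q x z * f x z) * g y z)
        ≤ |∑ y, ∑ z, (∑ x, p x y * q x z * f x z) * g y z| := le_abs_self _
      _ = Real.sqrt ((∑ y, ∑ z, (∑ x, p x y * q x z * f x z) * g y z) ^ 2) :=
          (Real.sqrt_sq_eq_abs _).symm
      _ ≤ Real.sqrt (termB p q f) := Real.sqrt_le_sqrt hcs3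
  -- achievability: sqrt (termB f) ∈ SR for feasible f
  have hmem : ∀ f : X → Z → ℝ, (∀ z, ∑ x, pX p x * q x z * f x z = 0) → termA p q f = 1 →
      Real.sqrt (termB p q f) ∈ SR := by
    intro f hf1 hf2
    rcases (hBnonneg f).eq_or_lt with hB0 | hBpos
    · -- termB f = 0 : all S vanish; use an arbitrary feasible g
      have hS0 : ∀ y z, (∑ x, p x y * q x z * f x z) = 0 := by
        have h1 : ∀ (y : Y) (z : Z),
            (0:ℝ) ≤ (∑ x, p x y * q x z * f x z) ^ 2 / pYZ p q y z :=
          fun y z => div_nonneg (sq_nonneg _) (hpYZpos y z).le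
        have h3 := (Finset.sum_eq_zero_iff_of_nonneg
          (fun y _ => Finset.sum_nonneg fun z _ => h1 y z)).mp hB0.symm
        intro y z
        have h4 := (Finset.sum_eq_zero_iff_of_nonneg
          (fun z _ => h1 y z)).mp (h3 y (mem_univ y)) z (mem_univ z)
        have h5 := (div_eq_zero_iff.mp h4).resolve_right (hpYZpos y z).ne'
        exact (pow_eq_zero_iff (by norm_num : (2:ℕ) ≠ 0)).mp h5
      obtain ⟨y₁, y₂, hy12⟩ := exists_pair_ne Y
      set indY : Y → ℝ := fun y => (if y = y₁ then 1 else 0) - (if y = y₂ then 1 else 0) with hindY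
      set k : Y → Z → ℝ := fun y z => indY y / pYZ p q y z with hk
      have hkcon : ∀ z, ∑ y, pYZ p q y z * k y z = 0 := by
        intro z
        have : ∀ y, pYZ p q y z * k y z = indY y := by
          intro y; rw [hk, mul_comm, div_mul_cancel₀ _ (hpYZpos y z).ne']
        rw [Finset.sum_congr rfl fun y _ => this y]
        simp [hindY, Finset.sum_sub_distrib, hy12]
      have hk1 : k y₁ z₀ ^ 2 = (1 / pYZ p q y₁ z₀) ^ 2 := by simp [hk, hindY, hy12]
      have hNpos : 0 < ∑ y, ∑ z, pYZ p q y z * k y z ^ 2 := by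
        have hterm : ∀ y z, 0 ≤ pYZ p q y z * k y z ^ 2 := fun y z =>
          mul_nonneg (hpYZpos y z).le (sq_nonneg _)
        refine Finset.sum_pos' (fun y _ => Finset.sum_nonneg fun z _ => hterm y z)
          ⟨y₁, mem_univ _, ?_⟩
        refine Finset.sum_pos' (fun z _ => hterm y₁ z) ⟨z₀, mem_univ _, ?_⟩
        rw [hk1]
        have := hpYZpos y₁ z₀
        positivity
      set cg : ℝ := (Real.sqrt (∑ y, ∑ z, pYZ p q y z * k y z ^ 2))⁻¹ with hcg
      refine ⟨f, fun y z => cg * k y z, hf1, ?_, hf2, ?_, ?_⟩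
      · intro z
        have : ∑ y, pYZ p q y z * (cg * k y z) = cg * ∑ y, pYZ p q y z * k y z := by
          rw [Finset.mul_sum]; exact Finset.sum_congr rfl fun y _ => by ring
        rw [this, hkcon z, mul_zero]
      · have : ∀ y, ∑ z, pYZ p q y z * (cg * k y z) ^ 2
            = cg ^ 2 * ∑ z, pYZ p q y z * k y z ^ 2 := by
          intro y; rw [Finset.mul_sum]; exact Finset.sum_congr rfl fun z _ => by ring
        rw [Finset.sum_congr rfl fun y _ => this y, ← Finset.mul_sum, hcg, inv_pow,
          Real.sq_sqrt hNpos.le, inv_mul_cancel₀ hNpos.ne']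
      · rw [← hB0, Real.sqrt_zero, val_eq]
        refine (Finset.sum_eq_zero fun y _ => Finset.sum_eq_zero fun z _ => ?_).symm
        rw [hS0 y z, zero_mul]
    · -- termB f > 0 : optimal g
      set Bf := termB p q f with hBf
      have hspos : 0 < Real.sqrt Bf := Real.sqrt_pos.mpr hBpos
      set g : Y → Z → ℝ := fun y z =>
        (∑ x, p x y * q x z * f x z) / (pYZ p q y z * Real.sqrt Bf) with hg
      refine ⟨f, g, hf1, ?_, hf2, ?_, ?_⟩
      · intro z
        have e : ∀ y, pYZ p q y z * g y z
            = (∑ x, p x y * q x z * f x z) * (Real.sqrt Bf)⁻¹ := by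
          intro y
          rw [hg]
          have h1 := (hpYZpos y z).ne'
          field_simp
        rw [Finset.sum_congr rfl fun y _ => e y, ← Finset.sum_mul, S_sum p q f hf1 z, zero_mul]
      · have e : ∀ y z, pYZ p q y z * g y z ^ 2
            = (∑ x, p x y * q x z * f x z) ^ 2 / pYZ p q y z * Bf⁻¹ := by
          intro y z
          rw [hg]
          have h1 := (hpYZpos y z).ne'
          rw [div_pow, mul_pow, Real.sq_sqrt hBpos.le]
          have h2 := hBpos.ne'
          field_simp
        rw [Finset.sum_congr rfl fun y _ => Finset.sum_congr rfl fun z _ => e y z]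
        simp only [← Finset.sum_mul]
        rw [show (∑ y, ∑ z, (∑ x, p x y * q x z * f x z) ^ 2 / pYZ p q y z) = Bf from rfl]
        exact mul_inv_cancel₀ hBpos.ne'
      · rw [val_eq]
        have e : ∀ y z, (∑ x, p x y * q x z * f x z) * g y z
            = (∑ x, p x y * q x z * f x z) ^ 2 / pYZ p q y z * (Real.sqrt Bf)⁻¹ := by
          intro y z
          rw [hg]
          have h1 := (hpYZpos y z).ne'
          field_simp
        rw [Finset.sum_congr rfl fun y _ => Finset.sum_congr rfl fun z _ => e y z]
        simp only [← Finset.sum_mul]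
        rw [show (∑ y, ∑ z, (∑ x, p x y * q x z * f x z) ^ 2 / pYZ p q y z) = Bf from rfl]
        rw [eq_comm, mul_inv_eq_iff_eq_mul₀ hspos.ne']
        exact (Real.mul_self_sqrt (hBnonneg f)).symm
  -- SR bounded and nonempty
  have hSRub : ∀ c ∈ SR, ∃ b ∈ SB, c ≤ Real.sqrt b := by
    rintro c ⟨f, g, h1, h2, h3, h4, rfl⟩
    exact ⟨termB p q f, ⟨f, h1, h3, rfl⟩, hpair f g h4⟩
  have hSRbdd : BddAbove SR := by
    refine ⟨1, fun c hc => ?_⟩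
    obtain ⟨b, hb, hcb⟩ := hSRub c hc
    calc c ≤ Real.sqrt b := hcb
      _ ≤ Real.sqrt 1 := Real.sqrt_le_sqrt (hSBub b hb)
      _ = 1 := Real.sqrt_one
  have hmem₀ := hmem f₀ hf₀1 hf₀2
  have hSRne : SR.Nonempty := ⟨_, hmem₀⟩
  have hRnonneg : 0 ≤ rhoR p q := by
    rw [hRR]
    exact le_trans (Real.sqrt_nonneg _) (le_csSup hSRbdd hmem₀)
  refine ⟨hRnonneg, le_antisymm ?_ ?_⟩
  · have h1 : rhoR p q ≤ Real.sqrt (rhoS2 p q) := by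
      rw [hRR]
      refine csSup_le hSRne fun c hc => ?_
      obtain ⟨b, hb, hcb⟩ := hSRub c hc
      calc c ≤ Real.sqrt b := hcb
        _ ≤ Real.sqrt (rhoS2 p q) := Real.sqrt_le_sqrt (by rw [hS2]; exact le_csSup hSBbdd hb)
    calc rhoR p q ^ 2 ≤ Real.sqrt (rhoS2 p q) ^ 2 := pow_le_pow_left₀ hRnonneg h1 2
      _ = rhoS2 p q := Real.sq_sqrt hS2nonneg
  · rw [hS2]
    refine csSup_le hSBne ?_
    rintro b ⟨f, h1, h2, rfl⟩
    have hsb : Real.sqrt (termB p q f) ≤ rhoR p q := by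
      rw [hRR]; exact le_csSup hSRbdd (hmem f h1 h2)
    calc termB p q f = Real.sqrt (termB p q f) ^ 2 := (Real.sq_sqrt (hBnonneg f)).symm
      _ ≤ rhoR p q ^ 2 := pow_le_pow_left₀ (Real.sqrt_nonneg _) hsb 2
end

section
/- (Theorem 2(ii): the representational maximum correlation is the maximum over z of the conditional maximum correlation.) Assume X has at least two elements and Y has at least two elements. Define ρ_s² = sSup { B(f) : f : X × Z → ℝ with ∑_x p(x) q(x,z) f(x,z) = 0 for every z and A(f) = 1 }. For each z define the conditional distributions p(x|z) = p(x) q(x,z) / p(z), p(y|z) = p(y,z) / p(z), p(x,y|z) = p(x,y) q(x,z) / p(z), and the conditional maximum correlation ρ_m(z) = sSup { ∑_{x,y} p(x,y|z) f(x) g(y) : f : X → ℝ, g : Y → ℝ, ∑_x p(x|z) f(x) = 0, ∑_x p(x|z) f(x)² = 1, ∑_y p(y|z) g(y) = 0, ∑_y p(y|z) g(y)² = 1 }. Then ρ_s² = max over z ∈ Z of ρ_m(z)². -/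
open Finset Filter Matrix

variable {X Y Z : Type*} [Fintype X] [Fintype Y] [Fintype Z]

/-- conditional distribution p(x|z) -/
noncomputable def pXgZ (p : X → Y → ℝ) (q : X → Z → ℝ) (x : X) (z : Z) : ℝ :=
  pX p x * q x z / pZ p q z

/-- conditional distribution p(y|z) -/
noncomputable def pYgZ (p : X → Y → ℝ) (q : X → Z → ℝ) (y : Y) (z : Z) : ℝ :=
  pYZ p q y z / pZ p q z

/-- conditional distribution p(x,y|z) -/
noncomputable def pXYgZ (p : X → Y → ℝ) (q : X → Z → ℝ) (x : X) (y : Y) (z : Z) : ℝ :=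
  p x y * q x z / pZ p q z

/-- conditional maximum correlation ρ_m(X,Y|Z=z) -/
noncomputable def rhoM (p : X → Y → ℝ) (q : X → Z → ℝ) (z : Z) : ℝ :=
  sSup {c : ℝ | ∃ f : X → ℝ, ∃ g : Y → ℝ,
    (∑ x, pXgZ p q x z * f x = 0) ∧ (∑ x, pXgZ p q x z * f x ^ 2 = 1) ∧
    (∑ y, pYgZ p q y z * g y = 0) ∧ (∑ y, pYgZ p q y z * g y ^ 2 = 1) ∧
    c = ∑ x, ∑ y, pXYgZ p q x y z * f x * g y}

section AuxLemmas
set_option linter.unusedSectionVars false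

variable {X Y Z : Type*} [Fintype X] [Fintype Y] [Fintype Z]

/-- weighted Cauchy-Schwarz -/
lemma aux_cs {ι : Type*} [Fintype ι] (w a b : ι → ℝ) (hw : ∀ i, 0 ≤ w i) :
    (∑ i, w i * a i * b i) ^ 2 ≤ (∑ i, w i * a i ^ 2) * (∑ i, w i * b i ^ 2) := by
  have key : ∀ i : ι, (Real.sqrt (w i) * a i) * (Real.sqrt (w i) * b i) = w i * a i * b i := by
    intro i
    rw [mul_mul_mul_comm, Real.mul_self_sqrt (hw i), mul_assoc]
  calc (∑ i, w i * a i * b i) ^ 2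
      = (∑ i, (Real.sqrt (w i) * a i) * (Real.sqrt (w i) * b i)) ^ 2 := by
        congr 1; exact Finset.sum_congr rfl fun i _ => (key i).symm
    _ ≤ (∑ i, (Real.sqrt (w i) * a i) ^ 2) * (∑ i, (Real.sqrt (w i) * b i) ^ 2) :=
        Finset.sum_mul_sq_le_sq_mul_sq _ _ _
    _ = (∑ i, w i * a i ^ 2) * (∑ i, w i * b i ^ 2) := by
        congr 1 <;> exact Finset.sum_congr rfl fun i _ => by
          rw [mul_pow, Real.sq_sqrt (hw i)]

lemma pX_pos [Nonempty Y] (p : X → Y → ℝ) (hp : ∀ x y, 0 < p x y) (x : X) : 0 < pX p x :=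
  Finset.sum_pos (fun y _ => hp x y) Finset.univ_nonempty

lemma pZ_pos [Nonempty X] [Nonempty Y] (p : X → Y → ℝ) (q : X → Z → ℝ)
    (hp : ∀ x y, 0 < p x y) (hq : ∀ x z, 0 < q x z) (z : Z) : 0 < pZ p q z :=
  Finset.sum_pos (fun x _ => mul_pos (pX_pos p hp x) (hq x z)) Finset.univ_nonempty

lemma pYZ_pos [Nonempty X] (p : X → Y → ℝ) (q : X → Z → ℝ)
    (hp : ∀ x y, 0 < p x y) (hq : ∀ x z, 0 < q x z) (y : Y) (z : Z) : 0 < pYZ p q y z :=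
  Finset.sum_pos (fun x _ => mul_pos (hp x y) (hq x z)) Finset.univ_nonempty

lemma pXgZ_pos [Nonempty X] [Nonempty Y] (p : X → Y → ℝ) (q : X → Z → ℝ)
    (hp : ∀ x y, 0 < p x y) (hq : ∀ x z, 0 < q x z) (x : X) (z : Z) : 0 < pXgZ p q x z :=
  div_pos (mul_pos (pX_pos p hp x) (hq x z)) (pZ_pos p q hp hq z)

lemma pYgZ_pos [Nonempty X] [Nonempty Y] (p : X → Y → ℝ) (q : X → Z → ℝ)
    (hp : ∀ x y, 0 < p x y) (hq : ∀ x z, 0 < q x z) (y : Y) (z : Z) : 0 < pYgZ p q y z :=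
  div_pos (pYZ_pos p q hp hq y z) (pZ_pos p q hp hq z)

lemma pXYgZ_pos [Nonempty X] [Nonempty Y] (p : X → Y → ℝ) (q : X → Z → ℝ)
    (hp : ∀ x y, 0 < p x y) (hq : ∀ x z, 0 < q x z) (x : X) (y : Y) (z : Z) :
    0 < pXYgZ p q x y z :=
  div_pos (mul_pos (hp x y) (hq x z)) (pZ_pos p q hp hq z)

lemma sum_pXYgZ_y (p : X → Y → ℝ) (q : X → Z → ℝ) (x : X) (z : Z) :
    ∑ y, pXYgZ p q x y z = pXgZ p q x z := by
  simp only [pXYgZ, pXgZ, pX]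
  rw [← Finset.sum_div, ← Finset.sum_mul]

lemma sum_pXYgZ_x (p : X → Y → ℝ) (q : X → Z → ℝ) (y : Y) (z : Z) :
    ∑ x, pXYgZ p q x y z = pYgZ p q y z := by
  simp only [pXYgZ, pYgZ, pYZ]
  rw [← Finset.sum_div]


lemma corr_le_one [Nonempty X] [Nonempty Y] (p : X → Y → ℝ) (q : X → Z → ℝ)
    (hp : ∀ x y, 0 < p x y) (hq : ∀ x z, 0 < q x z) (z : Z) (f : X → ℝ) (g : Y → ℝ)
    (hf2 : ∑ x, pXgZ p q x z * f x ^ 2 = 1) (hg2 : ∑ y, pYgZ p q y z * g y ^ 2 = 1) :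
    (∑ x, ∑ y, pXYgZ p q x y z * f x * g y) ≤ 1 := by
  set c := ∑ x, ∑ y, pXYgZ p q x y z * f x * g y with hc
  have hprod : c = ∑ i : X × Y, pXYgZ p q i.1 i.2 z * f i.1 * g i.2 := by
    rw [Fintype.sum_prod_type]
  have hcs := aux_cs (fun i : X × Y => pXYgZ p q i.1 i.2 z) (fun i => f i.1) (fun i => g i.2)
    (fun i => (pXYgZ_pos p q hp hq i.1 i.2 z).le)
  have e1 : ∑ i : X × Y, pXYgZ p q i.1 i.2 z * (f i.1) ^ 2 = 1 := by
    rw [Fintype.sum_prod_type]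
    calc ∑ x, ∑ y, pXYgZ p q x y z * f x ^ 2
        = ∑ x, (∑ y, pXYgZ p q x y z) * f x ^ 2 := by
          refine Finset.sum_congr rfl fun x _ => ?_; rw [Finset.sum_mul]
      _ = 1 := by simp_rw [sum_pXYgZ_y]; exact hf2
  have e2 : ∑ i : X × Y, pXYgZ p q i.1 i.2 z * (g i.2) ^ 2 = 1 := by
    rw [Fintype.sum_prod_type, Finset.sum_comm]
    calc ∑ y, ∑ x, pXYgZ p q x y z * g y ^ 2
        = ∑ y, (∑ x, pXYgZ p q x y z) * g y ^ 2 := by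
          refine Finset.sum_congr rfl fun y _ => ?_; rw [Finset.sum_mul]
      _ = 1 := by simp_rw [sum_pXYgZ_x]; exact hg2
  have : c ^ 2 ≤ 1 := by rw [hprod]; calc _ ≤ _ := hcs
                         _ = 1 := by rw [e1, e2, one_mul]
  nlinarith [sq_nonneg (c - 1)]

lemma bddAbove_Cz [Nonempty X] [Nonempty Y] (p : X → Y → ℝ) (q : X → Z → ℝ)
    (hp : ∀ x y, 0 < p x y) (hq : ∀ x z, 0 < q x z) (z : Z) :
    BddAbove {c : ℝ | ∃ f : X → ℝ, ∃ g : Y → ℝ,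
      (∑ x, pXgZ p q x z * f x = 0) ∧ (∑ x, pXgZ p q x z * f x ^ 2 = 1) ∧
      (∑ y, pYgZ p q y z * g y = 0) ∧ (∑ y, pYgZ p q y z * g y ^ 2 = 1) ∧
      c = ∑ x, ∑ y, pXYgZ p q x y z * f x * g y} := by
  refine ⟨1, fun c hc => ?_⟩
  obtain ⟨f, g, _, hf2, _, hg2, rfl⟩ := hc
  exact corr_le_one p q hp hq z f g hf2 hg2

lemma exists_normalized {ι : Type*} [Fintype ι] [Nontrivial ι] (w : ι → ℝ) (hw : ∀ i, 0 < w i) :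
    ∃ f : ι → ℝ, ∑ i, w i * f i = 0 ∧ ∑ i, w i * f i ^ 2 = 1 := by
  classical
  obtain ⟨x₀, x₁, hne⟩ := exists_pair_ne ι
  have hw0 := hw x₀
  have hw1 := hw x₁
  set N : ℝ := Real.sqrt (w x₀ * w x₁ * (w x₀ + w x₁)) with hN
  have hNsq : N ^ 2 = w x₀ * w x₁ * (w x₀ + w x₁) :=
    Real.sq_sqrt (by positivity)
  have hNpos : 0 < N := Real.sqrt_pos.mpr (by positivity)
  set v : ι → ℝ := fun i => if i = x₀ then w x₁ else if i = x₁ then -(w x₀) else 0 with hv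
  have hsupp : ∀ i ∈ Finset.univ, i ∉ ({x₀, x₁} : Finset ι) → w i * v i = 0 := by
    intro i _ hi
    simp only [Finset.mem_insert, Finset.mem_singleton, not_or] at hi
    simp [hv, hi.1, hi.2]
  have hsupp2 : ∀ i ∈ Finset.univ, i ∉ ({x₀, x₁} : Finset ι) → w i * v i ^ 2 = 0 := by
    intro i _ hi
    simp only [Finset.mem_insert, Finset.mem_singleton, not_or] at hi
    simp [hv, hi.1, hi.2]
  have hv0 : v x₀ = w x₁ := by simp [hv]
  have hv1 : v x₁ = -(w x₀) := by simp [hv, hne.symm]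
  have hs1 : ∑ i, w i * v i = 0 := by
    rw [← Finset.sum_subset (Finset.subset_univ ({x₀, x₁} : Finset ι)) hsupp,
      Finset.sum_pair hne, hv0, hv1]
    ring
  have hs2 : ∑ i, w i * v i ^ 2 = N ^ 2 := by
    rw [← Finset.sum_subset (Finset.subset_univ ({x₀, x₁} : Finset ι)) hsupp2,
      Finset.sum_pair hne, hv0, hv1, hNsq]
    ring
  refine ⟨fun i => v i / N, ?_, ?_⟩
  · rw [show ∑ i, w i * (v i / N) = (∑ i, w i * v i) / N by
      rw [Finset.sum_div]; exact Finset.sum_congr rfl fun i _ => (mul_div_assoc _ _ _).symm, hs1,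
      zero_div]
  · have : ∑ i, w i * (v i / N) ^ 2 = (∑ i, w i * v i ^ 2) / N ^ 2 := by
      rw [Finset.sum_div]
      exact Finset.sum_congr rfl fun i _ => by rw [div_pow, mul_div_assoc]
    rw [this, hs2, div_self (by positivity)]

lemma Cz_nonempty [Nontrivial X] [Nontrivial Y] (p : X → Y → ℝ) (q : X → Z → ℝ)
    (hp : ∀ x y, 0 < p x y) (hq : ∀ x z, 0 < q x z) (z : Z) :
    Set.Nonempty {c : ℝ | ∃ f : X → ℝ, ∃ g : Y → ℝ,
      (∑ x, pXgZ p q x z * f x = 0) ∧ (∑ x, pXgZ p q x z * f x ^ 2 = 1) ∧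
      (∑ y, pYgZ p q y z * g y = 0) ∧ (∑ y, pYgZ p q y z * g y ^ 2 = 1) ∧
      c = ∑ x, ∑ y, pXYgZ p q x y z * f x * g y} := by
  obtain ⟨f, hf1, hf2⟩ := exists_normalized (fun x => pXgZ p q x z)
    (fun x => pXgZ_pos p q hp hq x z)
  obtain ⟨g, hg1, hg2⟩ := exists_normalized (fun y => pYgZ p q y z)
    (fun y => pYgZ_pos p q hp hq y z)
  exact ⟨_, f, g, hf1, hf2, hg1, hg2, rfl⟩

lemma rhoM_nonneg [Nontrivial X] [Nontrivial Y] (p : X → Y → ℝ) (q : X → Z → ℝ)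
    (hp : ∀ x y, 0 < p x y) (hq : ∀ x z, 0 < q x z) (z : Z) : 0 ≤ rhoM p q z := by
  obtain ⟨c, f, g, h1, h2, h3, h4, hc⟩ := Cz_nonempty p q hp hq z
  have hmem : c ∈ {c : ℝ | ∃ f : X → ℝ, ∃ g : Y → ℝ,
      (∑ x, pXgZ p q x z * f x = 0) ∧ (∑ x, pXgZ p q x z * f x ^ 2 = 1) ∧
      (∑ y, pYgZ p q y z * g y = 0) ∧ (∑ y, pYgZ p q y z * g y ^ 2 = 1) ∧
      c = ∑ x, ∑ y, pXYgZ p q x y z * f x * g y} := ⟨f, g, h1, h2, h3, h4, hc⟩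
  have hmem' : -c ∈ {c : ℝ | ∃ f : X → ℝ, ∃ g : Y → ℝ,
      (∑ x, pXgZ p q x z * f x = 0) ∧ (∑ x, pXgZ p q x z * f x ^ 2 = 1) ∧
      (∑ y, pYgZ p q y z * g y = 0) ∧ (∑ y, pYgZ p q y z * g y ^ 2 = 1) ∧
      c = ∑ x, ∑ y, pXYgZ p q x y z * f x * g y} := by
    refine ⟨f, fun y => -(g y), h1, h2, ?_, ?_, ?_⟩
    · simpa [mul_neg, Finset.sum_neg_distrib] using h3
    · simpa using h4
    · rw [hc]; simp [mul_neg, ← Finset.sum_neg_distrib]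
  have b1 := le_csSup (bddAbove_Cz p q hp hq z) hmem
  have b2 := le_csSup (bddAbove_Cz p q hp hq z) hmem'
  unfold rhoM
  linarith

lemma lower_key [Nonempty X] [Nonempty Y] (p : X → Y → ℝ) (q : X → Z → ℝ)
    (hp : ∀ x y, 0 < p x y) (hq : ∀ x z, 0 < q x z) (z₀ : Z)
    (f : X → ℝ) (g : Y → ℝ)
    (hf1 : ∑ x, pXgZ p q x z₀ * f x = 0) (hf2 : ∑ x, pXgZ p q x z₀ * f x ^ 2 = 1)
    (hg2 : ∑ y, pYgZ p q y z₀ * g y ^ 2 = 1) :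
    ∃ F : X → Z → ℝ, (∀ z, ∑ x, pX p x * q x z * F x z = 0) ∧ termA p q F = 1 ∧
      (∑ x, ∑ y, pXYgZ p q x y z₀ * f x * g y) ^ 2 ≤ termB p q F := by
  classical
  set c0 := pZ p q z₀ with hc0def
  have hc0 : 0 < c0 := pZ_pos p q hp hq z₀
  set r := Real.sqrt c0 with hrdef
  have hr : 0 < r := Real.sqrt_pos.mpr hc0
  have hr2 : r ^ 2 = c0 := Real.sq_sqrt hc0.le
  set F : X → Z → ℝ := fun x z => if z = z₀ then f x / r else 0 with hF
  -- translate pXgZ-constraints to raw sums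
  have hraw1 : ∑ x, pX p x * q x z₀ * f x = 0 := by
    have : ∑ x, pXgZ p q x z₀ * f x = (∑ x, pX p x * q x z₀ * f x) / c0 := by
      rw [Finset.sum_div]
      exact Finset.sum_congr rfl fun x _ => by rw [pXgZ, div_mul_eq_mul_div]
    rw [this] at hf1
    exact (div_eq_zero_iff.mp hf1).resolve_right hc0.ne'
  have hraw2 : ∑ x, pX p x * q x z₀ * f x ^ 2 = c0 := by
    have : ∑ x, pXgZ p q x z₀ * f x ^ 2 = (∑ x, pX p x * q x z₀ * f x ^ 2) / c0 := by
      rw [Finset.sum_div]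
      exact Finset.sum_congr rfl fun x _ => by rw [pXgZ, div_mul_eq_mul_div]
    rw [this] at hf2
    field_simp at hf2
    linarith
  refine ⟨F, ?_, ?_, ?_⟩
  · intro z
    by_cases hz : z = z₀
    · rw [hz]
      have : ∀ x, pX p x * q x z₀ * F x z₀ = (pX p x * q x z₀ * f x) / r := by
        intro x; simp only [hF, if_pos rfl, mul_div_assoc]
      rw [Finset.sum_congr rfl fun x _ => this x, ← Finset.sum_div, hraw1, zero_div]
    · simp [hF, hz]
  · unfold termA
    have hx : ∀ x, ∑ z, pX p x * q x z * F x z ^ 2 = (pX p x * q x z₀ * f x ^ 2) / c0 := by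
      intro x
      rw [Finset.sum_eq_single_of_mem z₀ (Finset.mem_univ _)]
      · simp only [hF, if_pos rfl, div_pow, hr2, mul_div_assoc]
      · intro b _ hb; simp [hF, hb]
    rw [Finset.sum_congr rfl fun x _ => hx x, ← Finset.sum_div, hraw2, div_self hc0.ne']
  · -- termB computation
    set s : Y → ℝ := fun y => ∑ x, p x y * q x z₀ * f x with hs
    have hB : termB p q F = ∑ y, s y ^ 2 / (pYZ p q y z₀ * c0) := by
      unfold termB
      refine Finset.sum_congr rfl fun y _ => ?_
      rw [Finset.sum_eq_single_of_mem z₀ (Finset.mem_univ _)]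
      · have : ∑ x, p x y * q x z₀ * F x z₀ = s y / r := by
          rw [hs, Finset.sum_div]
          exact Finset.sum_congr rfl fun x _ => by
            simp only [hF, if_pos rfl, mul_div_assoc]
        rw [this, div_pow, hr2]
        ring
      · intro b _ hb; simp [hF, hb]
    set u : Y → ℝ := fun y => s y / pYZ p q y z₀ with hu
    have hyz : ∀ y, 0 < pYZ p q y z₀ := fun y => pYZ_pos p q hp hq y z₀
    -- c = ∑_y pYgZ * u * g
    have hcval : ∑ x, ∑ y, pXYgZ p q x y z₀ * f x * g y
        = ∑ y, pYgZ p q y z₀ * u y * g y := by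
      rw [Finset.sum_comm]
      refine Finset.sum_congr rfl fun y _ => ?_
      have h1 : ∑ x, pXYgZ p q x y z₀ * f x * g y
          = (∑ x, p x y * q x z₀ * f x) * g y / c0 := by
        rw [Finset.sum_mul, Finset.sum_div]
        refine Finset.sum_congr rfl fun x _ => ?_
        rw [pXYgZ]; ring
      have hy0 : pYZ p q y z₀ ≠ 0 := (hyz y).ne'
      have h00 : c0 ≠ 0 := hc0.ne'
      rw [h1, pYgZ, hu, ← hc0def]
      field_simp
      ring
    have hcs := aux_cs (fun y => pYgZ p q y z₀) u g
      (fun y => (pYgZ_pos p q hp hq y z₀).le)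
    have he1 : ∑ y, pYgZ p q y z₀ * u y ^ 2 = ∑ y, s y ^ 2 / (pYZ p q y z₀ * c0) := by
      refine Finset.sum_congr rfl fun y _ => ?_
      have hy0 : pYZ p q y z₀ ≠ 0 := (hyz y).ne'
      have h00 : c0 ≠ 0 := hc0.ne'
      rw [pYgZ, hu, div_pow, ← hc0def]
      field_simp
    rw [hcval, hB, ← he1]
    calc (∑ y, pYgZ p q y z₀ * u y * g y) ^ 2
        ≤ (∑ y, pYgZ p q y z₀ * u y ^ 2) * (∑ y, pYgZ p q y z₀ * g y ^ 2) := hcs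
      _ = ∑ y, pYgZ p q y z₀ * u y ^ 2 := by rw [hg2, mul_one]

lemma cond_slice [Nonempty X] [Nonempty Y] (p : X → Y → ℝ) (q : X → Z → ℝ)
    (hp : ∀ x y, 0 < p x y) (hq : ∀ x z, 0 < q x z) (z : Z) (f : X → ℝ)
    (hmean : ∑ x, pX p x * q x z * f x = 0) :
    ∑ y, (∑ x, p x y * q x z * f x) ^ 2 / pYZ p q y z
      ≤ rhoM p q z ^ 2 * ∑ x, pX p x * q x z * f x ^ 2 := by
  classical
  set c0 := pZ p q z with hc0def
  have hc0 : 0 < c0 := pZ_pos p q hp hq z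
  have hc0' : c0 ≠ 0 := hc0.ne'
  set s : Y → ℝ := fun y => ∑ x, p x y * q x z * f x with hs
  set A := ∑ x, pX p x * q x z * f x ^ 2 with hA
  set T := ∑ y, s y ^ 2 / pYZ p q y z with hT
  have hyz : ∀ y, 0 < pYZ p q y z := fun y => pYZ_pos p q hp hq y z
  have hA0 : 0 ≤ A := Finset.sum_nonneg fun x _ =>
    mul_nonneg (mul_nonneg (pX_pos p hp x).le (hq x z).le) (sq_nonneg _)
  have hT0 : 0 ≤ T := Finset.sum_nonneg fun y _ => div_nonneg (sq_nonneg _) (hyz y).le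
  rcases eq_or_lt_of_le hA0 with hAz | hApos
  · -- A = 0 ⇒ f ≡ 0 ⇒ T = 0
    have hf0 : ∀ x, f x = 0 := by
      intro x
      have h := (Finset.sum_eq_zero_iff_of_nonneg (fun x _ =>
        mul_nonneg (mul_nonneg (pX_pos p hp x).le (hq x z).le) (sq_nonneg (f x)))).mp
        hAz.symm x (Finset.mem_univ x)
      have hpos : 0 < pX p x * q x z := mul_pos (pX_pos p hp x) (hq x z)
      have h2 : f x ^ 2 = 0 := (mul_eq_zero.mp h).resolve_left hpos.ne'
      exact pow_eq_zero_iff (two_ne_zero) |>.mp h2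
    have hTz : T = 0 := by
      rw [hT]
      apply Finset.sum_eq_zero; intro y _
      have : s y = 0 := Finset.sum_eq_zero fun x _ => by rw [hf0 x, mul_zero]
      rw [this]; simp
    rw [hTz, ← hAz, mul_zero]

  · rcases eq_or_lt_of_le hT0 with hTz | hTpos
    · rw [← hTz]; positivity
    · have hA' : A ≠ 0 := hApos.ne'
      have hT' : T ≠ 0 := hTpos.ne'
      set E2 := A / c0 with hE2
      have hE2pos : 0 < E2 := div_pos hApos hc0
      set β := Real.sqrt E2 with hβ
      have hβpos : 0 < β := Real.sqrt_pos.mpr hE2pos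
      have hβ2 : β ^ 2 = E2 := Real.sq_sqrt hE2pos.le
      set D := T / c0 with hD
      have hDpos : 0 < D := div_pos hTpos hc0
      set δ := Real.sqrt D with hδ
      have hδpos : 0 < δ := Real.sqrt_pos.mpr hDpos
      have hδ2 : δ ^ 2 = D := Real.sq_sqrt hDpos.le
      set u : Y → ℝ := fun y => s y / pYZ p q y z with hu
      have hf1' : ∑ x, pXgZ p q x z * (f x / β) = 0 := by
        have h : ∀ x, pXgZ p q x z * (f x / β) = pX p x * q x z * f x / (c0 * β) := by
          intro x; rw [pXgZ, ← hc0def]; field_simp; try ring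
        rw [Finset.sum_congr rfl fun x _ => h x, ← Finset.sum_div, hmean, zero_div]
      have hf2' : ∑ x, pXgZ p q x z * (f x / β) ^ 2 = 1 := by
        have h : ∀ x, pXgZ p q x z * (f x / β) ^ 2
            = pX p x * q x z * f x ^ 2 / (c0 * E2) := by
          intro x; rw [pXgZ, ← hc0def, div_pow, hβ2]; field_simp; try ring
        rw [Finset.sum_congr rfl fun x _ => h x, ← Finset.sum_div, ← hA, hE2]
        field_simp
      have hsum_s : ∑ y, s y = 0 := by
        simp only [hs]
        rw [Finset.sum_comm]
        calc ∑ x, ∑ y, p x y * q x z * f x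
            = ∑ x, pX p x * q x z * f x := by
              refine Finset.sum_congr rfl fun x _ => ?_
              rw [← Finset.sum_mul, ← Finset.sum_mul, pX]
          _ = 0 := hmean
      have hg1' : ∑ y, pYgZ p q y z * (u y / δ) = 0 := by
        have h : ∀ y, pYgZ p q y z * (u y / δ) = s y / (c0 * δ) := by
          intro y
          have hy' : pYZ p q y z ≠ 0 := (hyz y).ne'
          rw [pYgZ, hu, ← hc0def]; field_simp; try ring
        rw [Finset.sum_congr rfl fun y _ => h y, ← Finset.sum_div, hsum_s, zero_div]
      have hg2' : ∑ y, pYgZ p q y z * (u y / δ) ^ 2 = 1 := by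
        have h : ∀ y, pYgZ p q y z * (u y / δ) ^ 2
            = (s y ^ 2 / pYZ p q y z) / (c0 * D) := by
          intro y
          have hy' : pYZ p q y z ≠ 0 := (hyz y).ne'
          rw [pYgZ, hu, ← hc0def, div_pow, div_pow, hδ2]; field_simp; try ring
        rw [Finset.sum_congr rfl fun y _ => h y, ← Finset.sum_div, ← hT, hD]
        field_simp
      have hcval : ∑ x, ∑ y, pXYgZ p q x y z * (f x / β) * (u y / δ) = δ / β := by
        rw [Finset.sum_comm]
        have hy : ∀ y, ∑ x, pXYgZ p q x y z * (f x / β) * (u y / δ)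
            = (s y ^ 2 / pYZ p q y z) / (c0 * β * δ) := by
          intro y
          have hy' : pYZ p q y z ≠ 0 := (hyz y).ne'
          have h : ∀ x, pXYgZ p q x y z * (f x / β) * (u y / δ)
              = (p x y * q x z * f x) * u y / (c0 * β * δ) := by
            intro x; rw [pXYgZ, ← hc0def]; field_simp; try ring
          have h2 : s y * u y = s y ^ 2 / pYZ p q y z := by
            rw [hu]; field_simp; try ring
          rw [Finset.sum_congr rfl fun x _ => h x, ← Finset.sum_div, ← Finset.sum_mul,
            show (∑ x, p x y * q x z * f x) = s y from rfl, h2]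
        rw [Finset.sum_congr rfl fun y _ => hy y, ← Finset.sum_div, ← hT]
        have hTval : T = c0 * δ ^ 2 := by rw [hδ2, hD]; field_simp
        rw [hTval]; field_simp; try ring
      have hmem : δ / β ∈ {c : ℝ | ∃ f : X → ℝ, ∃ g : Y → ℝ,
          (∑ x, pXgZ p q x z * f x = 0) ∧ (∑ x, pXgZ p q x z * f x ^ 2 = 1) ∧
          (∑ y, pYgZ p q y z * g y = 0) ∧ (∑ y, pYgZ p q y z * g y ^ 2 = 1) ∧
          c = ∑ x, ∑ y, pXYgZ p q x y z * f x * g y} :=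
        ⟨fun x => f x / β, fun y => u y / δ, hf1', hf2', hg1', hg2', hcval.symm⟩
      have hle : δ / β ≤ rhoM p q z := by
        rw [rhoM]
        exact le_csSup (bddAbove_Cz p q hp hq z) hmem
      have h1 : δ ≤ rhoM p q z * β := (div_le_iff₀ hβpos).mp hle
      have h2 : D ≤ rhoM p q z ^ 2 * E2 := by nlinarith [mul_self_le_mul_self hδpos.le h1, hδ2, hβ2]
      have hTc : T = D * c0 := by rw [hD]; field_simp
      have hAc : A = E2 * c0 := by rw [hE2]; field_simp
      rw [hTc, hAc]
      calc D * c0 ≤ (rhoM p q z ^ 2 * E2) * c0 := mul_le_mul_of_nonneg_right h2 hc0.le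
        _ = rhoM p q z ^ 2 * (E2 * c0) := by ring

end AuxLemmas

/-- Theorem 2(ii): ρ_s² equals the maximum over z of ρ_m(X,Y|Z=z)². -/
theorem rhoS2_eq_sup_rhoM [Nontrivial X] [Nontrivial Y] [Nonempty Z]
    (p : X → Y → ℝ) (q : X → Z → ℝ)
    (hp : ∀ x y, 0 < p x y) (hpsum : ∑ x, ∑ y, p x y = 1)
    (hq : ∀ x z, 0 < q x z) (hqsum : ∀ x, ∑ z, q x z = 1) :
    rhoS2 p q = ⨆ z : Z, rhoM p q z ^ 2 := by
  classical
  have hbddM : BddAbove (Set.range fun z : Z => rhoM p q z ^ 2) :=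
    Set.Finite.bddAbove (Set.finite_range _)
  set M := ⨆ z : Z, rhoM p q z ^ 2 with hM
  have hub : ∀ b ∈ {b : ℝ | ∃ f : X → Z → ℝ,
      (∀ z, ∑ x, pX p x * q x z * f x z = 0) ∧ termA p q f = 1 ∧ b = termB p q f}, b ≤ M := by
    rintro b ⟨f, hmean, hA, rfl⟩
    have hswapB : termB p q f
        = ∑ z, ∑ y, (∑ x, p x y * q x z * f x z) ^ 2 / pYZ p q y z := by
      rw [termB, Finset.sum_comm]
    have hswapA : ∑ z, ∑ x, pX p x * q x z * f x z ^ 2 = 1 := by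
      rw [Finset.sum_comm]; exact hA
    rw [hswapB]
    calc ∑ z, ∑ y, (∑ x, p x y * q x z * f x z) ^ 2 / pYZ p q y z
        ≤ ∑ z, rhoM p q z ^ 2 * ∑ x, pX p x * q x z * f x z ^ 2 :=
          Finset.sum_le_sum fun z _ => cond_slice p q hp hq z (fun x => f x z) (hmean z)
      _ ≤ ∑ z, M * ∑ x, pX p x * q x z * f x z ^ 2 := by
          refine Finset.sum_le_sum fun z _ => ?_
          refine mul_le_mul_of_nonneg_right (le_ciSup hbddM z) ?_
          exact Finset.sum_nonneg fun x _ =>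
            mul_nonneg (mul_nonneg (pX_pos p hp x).le (hq x z).le) (sq_nonneg _)
      _ = M * ∑ z, ∑ x, pX p x * q x z * f x z ^ 2 := by rw [Finset.mul_sum]
      _ = M := by rw [hswapA, mul_one]
  obtain ⟨z₀⟩ := ‹Nonempty Z›
  have hSne : Set.Nonempty {b : ℝ | ∃ f : X → Z → ℝ,
      (∀ z, ∑ x, pX p x * q x z * f x z = 0) ∧ termA p q f = 1 ∧ b = termB p q f} := by
    obtain ⟨c, f, g, h1, h2, h3, h4, hc⟩ := Cz_nonempty p q hp hq z₀
    obtain ⟨F, hF1, hF2, _⟩ := lower_key p q hp hq z₀ f g h1 h2 h4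
    exact ⟨termB p q F, F, hF1, hF2, rfl⟩
  have hbddS : BddAbove {b : ℝ | ∃ f : X → Z → ℝ,
      (∀ z, ∑ x, pX p x * q x z * f x z = 0) ∧ termA p q f = 1 ∧ b = termB p q f} := ⟨M, hub⟩
  have h0 : 0 ≤ rhoS2 p q := by
    obtain ⟨b, hb⟩ := hSne
    obtain ⟨f, hmean, hA, rfl⟩ := hb
    have hb0 : 0 ≤ termB p q f := Finset.sum_nonneg fun y _ => Finset.sum_nonneg fun z _ =>
      div_nonneg (sq_nonneg _) (pYZ_pos p q hp hq y z).le
    refine le_trans hb0 ?_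
    rw [rhoS2]
    exact le_csSup hbddS ⟨f, hmean, hA, rfl⟩
  refine le_antisymm ?_ ?_
  · rw [rhoS2]; exact csSup_le hSne hub
  · rw [hM]
    refine ciSup_le fun z => ?_
    set R := Real.sqrt (rhoS2 p q) with hR
    have hR0 : 0 ≤ R := Real.sqrt_nonneg _
    have hR2 : R ^ 2 = rhoS2 p q := Real.sq_sqrt h0
    have hρR : rhoM p q z ≤ R := by
      rw [rhoM]
      refine csSup_le (Cz_nonempty p q hp hq z) ?_
      rintro c ⟨f, g, h1, h2, h3, h4, rfl⟩
      obtain ⟨F, hF1, hF2, hF3⟩ := lower_key p q hp hq z f g h1 h2 h4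
      have hcsq : (∑ x, ∑ y, pXYgZ p q x y z * f x * g y) ^ 2 ≤ rhoS2 p q := by
        refine le_trans hF3 ?_
        rw [rhoS2]
        exact le_csSup hbddS ⟨F, hF1, hF2, rfl⟩
      calc (∑ x, ∑ y, pXYgZ p q x y z * f x * g y)
          ≤ |∑ x, ∑ y, pXYgZ p q x y z * f x * g y| := le_abs_self _
        _ = Real.sqrt ((∑ x, ∑ y, pXYgZ p q x y z * f x * g y) ^ 2) :=
            (Real.sqrt_sq_eq_abs _).symm
        _ ≤ Real.sqrt (rhoS2 p q) := Real.sqrt_le_sqrt hcsq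
        _ = R := by rw [hR]
    have hfin := pow_le_pow_left₀ (rhoM_nonneg p q hp hq z) hρR 2
    rw [hR2] at hfin
    exact hfin
end
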